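/- arXiv:0911.5019 — 5 statements merged into one kernel-verified Lean document; each statement's English description precedes it below -/
import Mathlib

section
/- For λ a partition of n into distinct nonnegative parts (so 0 may appear as a part, all parts distinct) whose smallest part is even, having l parts of which ℓ_o(λ) are odd, define ω_e(λ) = (-1)^{l-1} a^{ℓ_o(λ)}. Then ∑_{λ ∈ Q(n)} ω_e(λ) = (-a)^k if n = k^2 for some positive integer k, and 0 otherwise, as polynomials in a. -/
open Finset

open scoped Classical in
/-- `Qset n` : partitions of `n` into distinct nonnegative parts (so `0` may be a part)
with smallest part even, encoded as finsets of parts. -/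
noncomputable def Qset (n : ℕ) : Finset (Finset ℕ) :=
  (Finset.range (n + 1)).powerset.filter
    (fun S => S.sum id = n ∧ ∃ m ∈ S, Even m ∧ ∀ x ∈ S, m ≤ x)

namespace WQT
open scoped Classical

/-- number of odd elements -/
noncomputable def ocount (T : Finset ℕ) : ℕ := (T.filter (fun x => Odd x)).card
/-- number of even elements -/
noncomputable def ecount (T : Finset ℕ) : ℕ := (T.filter (fun x => ¬ Odd x)).card

/-- partitions of n into distinct positive parts with smallest part odd -/
noncomputable def Aset (n : ℕ) : Finset (Finset ℕ) :=
  (Finset.range (n + 1)).powerset.filter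
    (fun T => T.sum id = n ∧ ∃ m ∈ T, Odd m ∧ ∀ x ∈ T, m ≤ x)

noncomputable def Nsum (j n : ℕ) : ℤ :=
  ∑ T ∈ (Aset n).filter (fun T => ocount T = j), (-1 : ℤ) ^ (ecount T)

lemma subset_range_of_sum {n : ℕ} {T : Finset ℕ} (h : T.sum id = n) :
    T ⊆ Finset.range (n + 1) := by
  intro x hx
  have : x ≤ T.sum id := Finset.single_le_sum (fun i _ => Nat.zero_le i) hx
  simp only [Finset.mem_range]; omega

lemma mem_Aset_iff {n : ℕ} {T : Finset ℕ} :
    T ∈ Aset n ↔ T.sum id = n ∧ ∃ m ∈ T, Odd m ∧ ∀ x ∈ T, m ≤ x := by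
  unfold Aset
  rw [Finset.mem_filter, Finset.mem_powerset]
  constructor
  · rintro ⟨-, h⟩; exact h
  · rintro ⟨h1, h2⟩; exact ⟨subset_range_of_sum h1, h1, h2⟩

lemma card_sq_le_sum_of_odd :
    ∀ (c : ℕ) (s : Finset ℕ), s.card = c → (∀ x ∈ s, Odd x) → c ^ 2 ≤ s.sum id := by
  intro c
  induction c with
  | zero => intro s _ _; simp
  | succ k ih =>
    intro s hc hodd
    have hne : s.Nonempty := Finset.card_pos.mp (by omega)
    set m := s.min' hne with hm
    have hmmem : m ∈ s := s.min'_mem hne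
    have hmin : ∀ x ∈ s, m ≤ x := fun x hx => s.min'_le x hx
    have hmodd : Odd m := hodd m hmmem
    have hm1 : 1 ≤ m := hmodd.pos
    -- elements of erase are ≥ m + 2
    have herase : ∀ x ∈ s.erase m, m + 2 ≤ x := by
      intro x hx
      have hxs := Finset.mem_of_mem_erase hx
      have hxo := hodd x hxs
      have := hmin x hxs
      have hne' := Finset.ne_of_mem_erase hx
      rw [Nat.odd_iff] at hxo hmodd
      omega
    set s' := (s.erase m).image (fun x => x - 2) with hs'
    have hinj : ∀ x ∈ s.erase m, ∀ y ∈ s.erase m, x - 2 = y - 2 → x = y := by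
      intro x hx y hy hxy
      have := herase x hx; have := herase y hy; omega
    have hcard' : s'.card = k := by
      rw [hs', Finset.card_image_of_injOn hinj, Finset.card_erase_of_mem hmmem, hc]
      omega
    have hodd' : ∀ x ∈ s', Odd x := by
      intro x hx
      rw [hs', Finset.mem_image] at hx
      obtain ⟨y, hy, rfl⟩ := hx
      have h2 := herase y hy
      have := hodd y (Finset.mem_of_mem_erase hy)
      rw [Nat.odd_iff] at this ⊢; omega
    have hsum' : s'.sum id + 2 * k = (s.erase m).sum id := by
      rw [hs', Finset.sum_image hinj]
      have : ∀ x ∈ s.erase m, (x - 2) + 2 = x := fun x hx => by have := herase x hx; omega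
      calc (∑ x ∈ s.erase m, id (x - 2)) + 2 * k
          = (∑ x ∈ s.erase m, (x - 2)) + ∑ _x ∈ s.erase m, 2 := by
            simp [Finset.sum_const, Finset.card_erase_of_mem hmmem, hc, mul_comm]
        _ = ∑ x ∈ s.erase m, ((x - 2) + 2) := by rw [Finset.sum_add_distrib]
        _ = ∑ x ∈ s.erase m, x := Finset.sum_congr rfl this
        _ = (s.erase m).sum id := rfl
    have ihs := ih s' hcard' hodd'
    have : s.sum id = m + (s.erase m).sum id := (Finset.add_sum_erase s id hmmem).symm
    have hm2k : 2 * k + 1 ≤ m + 2 * k := by omega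
    nlinarith [ihs, hsum', this, hm1]

lemma Nsum_zero {n : ℕ} (hn : 1 ≤ n) : Nsum 0 n = 0 := by
  unfold Nsum
  rw [Finset.sum_eq_zero]
  intro T hT
  rw [Finset.mem_filter, mem_Aset_iff] at hT
  obtain ⟨⟨h1, m, hm, hmo, -⟩, h2⟩ := hT
  exfalso
  have : m ∈ T.filter (fun x => Odd x) := Finset.mem_filter.mpr ⟨hm, hmo⟩
  have := Finset.card_pos.mpr ⟨m, this⟩
  unfold ocount at h2; omega

lemma Nsum_of_lt_sq {n j : ℕ} (h : n < j ^ 2) : Nsum j n = 0 := by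
  unfold Nsum
  rw [Finset.sum_eq_zero]
  intro T hT
  rw [Finset.mem_filter, mem_Aset_iff] at hT
  obtain ⟨⟨h1, -⟩, h2⟩ := hT
  exfalso
  have hodd : ∀ x ∈ T.filter (fun x => Odd x), Odd x := by
    intro x hx; exact (Finset.mem_filter.mp hx).2
  have hle := card_sq_le_sum_of_odd _ _ rfl hodd
  have hsub : (T.filter (fun x => Odd x)).sum id ≤ T.sum id :=
    Finset.sum_le_sum_of_subset (Finset.filter_subset _ _)
  unfold ocount at h2
  rw [h2] at hle
  omega

lemma Aset_one : Aset 1 = {({1} : Finset ℕ)} := by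
  ext T
  rw [mem_Aset_iff, Finset.mem_singleton]
  constructor
  · rintro ⟨hsum, m, hm, hmo, hmin⟩
    have hle : ∀ x ∈ T, x ≤ 1 := by
      intro x hx
      have : x ≤ T.sum id := Finset.single_le_sum (fun i _ => Nat.zero_le i) hx
      omega
    have hm1 : m = 1 := by
      have := hle m hm
      rw [Nat.odd_iff] at hmo; omega
    ext x
    simp only [Finset.mem_singleton]
    constructor
    · intro hx; have := hle x hx; have := hmin x hx; omega
    · rintro rfl; rwa [hm1] at hm
  · rintro rfl
    refine ⟨by simp, 1, by simp, ⟨0, by ring⟩, by simp⟩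

lemma Nsum_one (j : ℕ) : Nsum j 1 = if 1 = j ^ 2 then 1 else 0 := by
  unfold Nsum
  rw [Aset_one]
  have ho : ocount ({1} : Finset ℕ) = 1 := by
    unfold ocount
    rw [Finset.filter_singleton, if_pos (by exact ⟨0, by ring⟩)]
    simp
  have he : ecount ({1} : Finset ℕ) = 0 := by
    unfold ecount
    rw [Finset.filter_singleton, if_neg (by simp [Nat.odd_iff])]
    simp
  by_cases hj : j = 1
  · subst hj
    rw [if_pos (by ring)]
    rw [Finset.filter_singleton, if_pos (by rw [ho]), Finset.sum_singleton, he]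
    simp
  · rw [if_neg (fun h => hj (by nlinarith [h.symm]))]
    rw [Finset.filter_singleton, if_neg (by rw [ho]; omega), Finset.sum_empty]

-- ===== chunk 2: gmap involution =====

def isGood (T : Finset ℕ) : Prop :=
  1 ∈ T ∧ (∃ p ∈ T, Odd p ∧ 3 ≤ p) ∧
    ∀ x ∈ T, ¬ Odd x → ∃ p ∈ T, Odd p ∧ 3 ≤ p ∧ p ≤ x + 1

noncomputable def fmin (T : Finset ℕ) : ℕ := if h : T.Nonempty then T.min' h else 0

noncomputable def minE (T : Finset ℕ) : ℕ := fmin (T.filter (fun x => ¬ Odd x))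

noncomputable def gmap (T : Finset ℕ) : Finset ℕ :=
  if 1 ∈ T then insert (minE T + 1) ((T.erase 1).erase (minE T))
  else insert 1 (insert (fmin T - 1) (T.erase (fmin T)))

lemma fmin_spec {T : Finset ℕ} (h : T.Nonempty) :
    fmin T ∈ T ∧ ∀ x ∈ T, fmin T ≤ x := by
  unfold fmin
  rw [dif_pos h]
  exact ⟨T.min'_mem h, fun x hx => T.min'_le x hx⟩

lemma fmin_eq {T : Finset ℕ} {m : ℕ} (hm : m ∈ T) (hmin : ∀ x ∈ T, m ≤ x) :
    fmin T = m := by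
  have hne : T.Nonempty := ⟨m, hm⟩
  obtain ⟨h1, h2⟩ := fmin_spec hne
  exact le_antisymm (h2 m hm) (hmin _ h1)

lemma filter_odd_insert_odd {a : ℕ} {s : Finset ℕ} (ha : Odd a) :
    (insert a s).filter (fun x => Odd x) = insert a (s.filter (fun x => Odd x)) := by
  ext x
  simp only [Finset.mem_filter, Finset.mem_insert]
  constructor
  · rintro ⟨h | h, ho⟩
    · exact Or.inl h
    · exact Or.inr ⟨h, ho⟩
  · rintro (rfl | ⟨h, ho⟩)
    · exact ⟨Or.inl rfl, ha⟩
    · exact ⟨Or.inr h, ho⟩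

lemma filter_odd_insert_even {a : ℕ} {s : Finset ℕ} (ha : ¬ Odd a) :
    (insert a s).filter (fun x => Odd x) = s.filter (fun x => Odd x) := by
  ext x
  simp only [Finset.mem_filter, Finset.mem_insert]
  constructor
  · rintro ⟨h | h, ho⟩
    · subst h; exact absurd ho ha
    · exact ⟨h, ho⟩
  · rintro ⟨h, ho⟩
    exact ⟨Or.inr h, ho⟩

lemma filter_even_insert_even {a : ℕ} {s : Finset ℕ} (ha : ¬ Odd a) :
    (insert a s).filter (fun x => ¬ Odd x) = insert a (s.filter (fun x => ¬ Odd x)) := by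
  ext x
  simp only [Finset.mem_filter, Finset.mem_insert]
  constructor
  · rintro ⟨h | h, ho⟩
    · exact Or.inl h
    · exact Or.inr ⟨h, ho⟩
  · rintro (rfl | ⟨h, ho⟩)
    · exact ⟨Or.inl rfl, ha⟩
    · exact ⟨Or.inr h, ho⟩

lemma filter_even_insert_odd {a : ℕ} {s : Finset ℕ} (ha : Odd a) :
    (insert a s).filter (fun x => ¬ Odd x) = s.filter (fun x => ¬ Odd x) := by
  ext x
  simp only [Finset.mem_filter, Finset.mem_insert]
  constructor
  · rintro ⟨h | h, ho⟩
    · subst h; exact absurd ha ho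
    · exact ⟨h, ho⟩
  · rintro ⟨h, ho⟩
    exact ⟨Or.inr h, ho⟩

lemma odd_one' : Odd (1 : ℕ) := ⟨0, by ring⟩

/-- case X : `1 ∉ T`, replace the (odd, ≥ 3) minimum `m` by `{1, m-1}`. -/
lemma caseX {n : ℕ} (hn : 2 ≤ n) {T : Finset ℕ} (hT : T ∈ Aset n) (h1 : 1 ∉ T) :
    gmap T ∈ Aset n ∧ ocount (gmap T) = ocount T ∧ ecount (gmap T) = ecount T + 1 ∧
      ¬ isGood (gmap T) ∧ 1 ∈ gmap T ∧ gmap (gmap T) = T := by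
  rw [mem_Aset_iff] at hT
  obtain ⟨hsum, m, hm, hmo, hmin⟩ := hT
  have hfm : fmin T = m := fmin_eq hm hmin
  have hm2 : m % 2 = 1 := Nat.odd_iff.mp hmo
  have hm3 : 3 ≤ m := by
    rcases Nat.lt_or_ge m 3 with h | h
    · interval_cases m
      · omega
      · exact absurd hm h1
      · omega
    · exact h
  have hg : gmap T = insert 1 (insert (m - 1) (T.erase m)) := by
    unfold gmap
    rw [if_neg h1, hfm]
  have hm1T : m - 1 ∉ T := fun h => by have := hmin _ h; omega
  have hm1E : m - 1 ∉ T.erase m := fun h => hm1T (Finset.mem_of_mem_erase h)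
  have h1E : 1 ∉ insert (m - 1) (T.erase m) := by
    intro h
    rcases Finset.mem_insert.mp h with h | h
    · omega
    · exact h1 (Finset.mem_of_mem_erase h)
  have hm1even : ¬ Odd (m - 1) := by rw [Nat.odd_iff]; omega
  -- sum
  have hsum' : (gmap T).sum id = n := by
    rw [hg, Finset.sum_insert h1E, Finset.sum_insert hm1E]
    have h3 := Finset.add_sum_erase T id hm
    simp only [id_eq] at h3 ⊢
    have hTsum : ∑ x ∈ T, x = n := by simpa [id_eq] using hsum
    omega
  -- membership in Aset
  have hmem : gmap T ∈ Aset n := by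
    rw [mem_Aset_iff]
    refine ⟨hsum', 1, by rw [hg]; exact Finset.mem_insert_self _ _, odd_one', ?_⟩
    intro x hx
    rw [hg] at hx
    rcases Finset.mem_insert.mp hx with rfl | hx
    · omega
    rcases Finset.mem_insert.mp hx with rfl | hx
    · omega
    · have := hmin x (Finset.mem_of_mem_erase hx); omega
  -- ocount
  have hfo : (gmap T).filter (fun x => Odd x) = insert 1 ((T.filter (fun x => Odd x)).erase m) := by
    rw [hg, filter_odd_insert_odd odd_one', filter_odd_insert_even hm1even, Finset.filter_erase]
  have h1fo : (1 : ℕ) ∉ (T.filter (fun x => Odd x)).erase m := by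
    intro h
    exact h1 (Finset.mem_filter.mp (Finset.mem_of_mem_erase h)).1
  have hmfo : m ∈ T.filter (fun x => Odd x) := Finset.mem_filter.mpr ⟨hm, hmo⟩
  have hoc : ocount (gmap T) = ocount T := by
    unfold ocount
    rw [hfo, Finset.card_insert_of_notMem h1fo, Finset.card_erase_of_mem hmfo]
    have : 1 ≤ (T.filter (fun x => Odd x)).card := Finset.card_pos.mpr ⟨m, hmfo⟩
    omega
  -- ecount
  have hfe : (gmap T).filter (fun x => ¬ Odd x)
      = insert (m - 1) (T.filter (fun x => ¬ Odd x)) := by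
    rw [hg, filter_even_insert_odd odd_one', filter_even_insert_even hm1even,
      Finset.filter_erase, Finset.erase_eq_of_notMem (by
        intro h
        exact (Finset.mem_filter.mp h).2 hmo)]
  have hm1fe : m - 1 ∉ T.filter (fun x => ¬ Odd x) := fun h => hm1T (Finset.mem_filter.mp h).1
  have hec : ecount (gmap T) = ecount T + 1 := by
    unfold ecount
    rw [hfe, Finset.card_insert_of_notMem hm1fe]
  -- not good
  have hng : ¬ isGood (gmap T) := by
    rintro ⟨-, -, hC⟩
    obtain ⟨p, hp, hpo, hp3, hple⟩ := hC (m - 1)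
      (by rw [hg]; exact Finset.mem_insert_of_mem (Finset.mem_insert_self _ _)) hm1even
    rw [hg] at hp
    have hpodd := Nat.odd_iff.mp hpo
    rcases Finset.mem_insert.mp hp with h | hp
    · omega
    rcases Finset.mem_insert.mp hp with h | hp
    · omega
    · obtain ⟨hpne, hpT⟩ := Finset.mem_erase.mp hp
      have := hmin p hpT
      omega
  -- round trip
  have h1g : 1 ∈ gmap T := by rw [hg]; exact Finset.mem_insert_self _ _
  have hminE : minE (gmap T) = m - 1 := by
    unfold minE
    apply fmin_eq
    · rw [hfe]; exact Finset.mem_insert_self _ _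
    · intro x hx
      rw [hfe] at hx
      rcases Finset.mem_insert.mp hx with rfl | hx
      · exact le_rfl
      · have := hmin x (Finset.mem_filter.mp hx).1; omega
  have hround : gmap (gmap T) = T := by
    conv_lhs => rw [gmap]
    rw [if_pos h1g, hminE, hg, Finset.erase_insert h1E, Finset.erase_insert hm1E]
    have h4 : m - 1 + 1 = m := by omega
    rw [h4, Finset.insert_erase hm]
  exact ⟨hmem, hoc, hec, hng, h1g, hround⟩

-- ===== chunk 3: case Y =====

/-- case Y : `1 ∈ T`, `T` bad: merge `1` and the smallest even part `e₀` into `e₀+1`. -/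
lemma caseY {n : ℕ} (hn : 2 ≤ n) {T : Finset ℕ} (hT : T ∈ Aset n) (h1 : 1 ∈ T)
    (hbad : ¬ isGood T) :
    gmap T ∈ Aset n ∧ ocount (gmap T) = ocount T ∧ ecount T = ecount (gmap T) + 1 ∧
      ¬ isGood (gmap T) ∧ 1 ∉ gmap T ∧ gmap (gmap T) = T := by
  rw [mem_Aset_iff] at hT
  obtain ⟨hsum, m₀, hm₀, hm₀o, hmin⟩ := hT
  set E := T.filter (fun x => ¬ Odd x) with hE
  -- E is nonempty
  have hEne : E.Nonempty := by
    rcases Finset.eq_empty_or_nonempty E with hemp | hne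
    · exfalso
      have hallodd : ∀ x ∈ T, Odd x := by
        intro x hx
        by_contra hxo
        have : x ∈ E := Finset.mem_filter.mpr ⟨hx, hxo⟩
        rw [hemp] at this
        exact absurd this (Finset.notMem_empty x)
      by_cases hB : ∃ p ∈ T, Odd p ∧ 3 ≤ p
      · exact hbad ⟨h1, hB, fun x hx hxo => absurd (hallodd x hx) hxo⟩
      · -- T ⊆ {1}
        have hsub : T ⊆ {1} := by
          intro x hx
          have hxo := Nat.odd_iff.mp (hallodd x hx)
          have : ¬ (3 ≤ x) := fun h3 => hB ⟨x, hx, hallodd x hx, h3⟩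
          simp only [Finset.mem_singleton]
          omega
        have h7 := Finset.sum_le_sum_of_subset (f := id) hsub
        simp only [Finset.sum_singleton, id_eq] at h7
        have hTsum : ∑ x ∈ T, x = n := by simpa [id_eq] using hsum
        omega
    · exact hne
  obtain ⟨he₀E, he₀min⟩ := fmin_spec hEne
  set e₀ := fmin E with he₀
  have he₀T : e₀ ∈ T := (Finset.mem_filter.mp he₀E).1
  have he₀even : ¬ Odd e₀ := (Finset.mem_filter.mp he₀E).2
  have he₀mod : e₀ % 2 = 0 := Nat.even_iff.mp (Nat.not_odd_iff_even.mp he₀even)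
  have hminE_eq : minE T = e₀ := rfl
  have hm₀1 : m₀ = 1 := by
    have h := hmin 1 h1
    have := Nat.odd_iff.mp hm₀o
    omega
  have he₀2 : 2 ≤ e₀ := by
    have := hmin e₀ he₀T
    omega
  -- the gap property
  have hgap : ∀ p ∈ T, Odd p → 3 ≤ p → e₀ + 2 ≤ p := by
    intro p hp hpo hp3
    have hB : ∃ p ∈ T, Odd p ∧ 3 ≤ p := ⟨p, hp, hpo, hp3⟩
    have hnC : ¬ (∀ x ∈ T, ¬ Odd x → ∃ q ∈ T, Odd q ∧ 3 ≤ q ∧ q ≤ x + 1) := by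
      intro hC
      exact hbad ⟨h1, hB, hC⟩
    push_neg at hnC
    obtain ⟨x, hx, hxe, hxw⟩ := hnC
    have hxE : x ∈ E := Finset.mem_filter.mpr ⟨hx, hxe⟩
    have he₀x : e₀ ≤ x := he₀min x hxE
    have := hxw p hp hpo hp3
    omega
  have hg : gmap T = insert (e₀ + 1) ((T.erase 1).erase e₀) := by
    unfold gmap
    rw [if_pos h1, hminE_eq]
  have he₀e1 : e₀ ∈ T.erase 1 := Finset.mem_erase.mpr ⟨by omega, he₀T⟩
  have hnot : (e₀ + 1) ∉ (T.erase 1).erase e₀ := by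
    intro h
    have hT' := Finset.mem_of_mem_erase (Finset.mem_of_mem_erase h)
    have : Odd (e₀ + 1) := by rw [Nat.odd_iff]; omega
    have := hgap (e₀ + 1) hT' this (by omega)
    omega
  -- sum
  have hsum' : (gmap T).sum id = n := by
    rw [hg, Finset.sum_insert hnot]
    have h3 := Finset.add_sum_erase T id h1
    have h4 := Finset.add_sum_erase (T.erase 1) id he₀e1
    have hTsum : ∑ x ∈ T, x = n := by simpa [id_eq] using hsum
    simp only [id_eq] at h3 h4 ⊢
    omega
  -- membership
  have hmem : gmap T ∈ Aset n := by
    rw [mem_Aset_iff]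
    refine ⟨hsum', e₀ + 1, by rw [hg]; exact Finset.mem_insert_self _ _,
      by rw [Nat.odd_iff]; omega, ?_⟩
    intro x hx
    rw [hg] at hx
    rcases Finset.mem_insert.mp hx with rfl | hx
    · exact le_rfl
    obtain ⟨hxe₀, hx'⟩ := Finset.mem_erase.mp hx
    obtain ⟨hx1, hxT⟩ := Finset.mem_erase.mp hx'
    by_cases hxo : Odd x
    · have hxm : x % 2 = 1 := Nat.odd_iff.mp hxo
      have := hgap x hxT hxo (by omega)
      omega
    · have hxE : x ∈ E := Finset.mem_filter.mpr ⟨hxT, hxo⟩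
      have := he₀min x hxE
      omega
  -- ocount
  have h1fo : 1 ∈ T.filter (fun x => Odd x) := Finset.mem_filter.mpr ⟨h1, odd_one'⟩
  have hfo : (gmap T).filter (fun x => Odd x)
      = insert (e₀ + 1) ((T.filter (fun x => Odd x)).erase 1) := by
    rw [hg, filter_odd_insert_odd (by rw [Nat.odd_iff]; omega), Finset.filter_erase,
      Finset.filter_erase]
    congr 1
    rw [Finset.erase_eq_of_notMem]
    intro h
    exact he₀even (Finset.mem_filter.mp (Finset.mem_of_mem_erase h)).2
  have hnotfo : (e₀ + 1) ∉ (T.filter (fun x => Odd x)).erase 1 := by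
    intro h
    obtain ⟨hne, hmem'⟩ := Finset.mem_erase.mp h
    have hT' := (Finset.mem_filter.mp hmem').1
    have := hgap (e₀ + 1) hT' (by rw [Nat.odd_iff]; omega) (by omega)
    omega
  have hoc : ocount (gmap T) = ocount T := by
    unfold ocount
    rw [hfo, Finset.card_insert_of_notMem hnotfo, Finset.card_erase_of_mem h1fo]
    have : 1 ≤ (T.filter (fun x => Odd x)).card := Finset.card_pos.mpr ⟨1, h1fo⟩
    omega
  -- ecount
  have hfe : (gmap T).filter (fun x => ¬ Odd x)
      = (T.filter (fun x => ¬ Odd x)).erase e₀ := by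
    rw [hg, filter_even_insert_odd (by rw [Nat.odd_iff]; omega), Finset.filter_erase,
      Finset.filter_erase]
    congr 1
    rw [Finset.erase_eq_of_notMem]
    intro h
    exact (Finset.mem_filter.mp h).2 odd_one'
  have hec : ecount T = ecount (gmap T) + 1 := by
    unfold ecount
    rw [hfe, Finset.card_erase_of_mem he₀E]
    have h6 : 1 ≤ E.card := Finset.card_pos.mpr ⟨e₀, he₀E⟩
    rw [← hE]
    omega
  -- 1 ∉ gmap T, not good
  have h1ng : 1 ∉ gmap T := by
    rw [hg]
    intro h
    rcases Finset.mem_insert.mp h with h | h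
    · omega
    · exact absurd (Finset.mem_of_mem_erase h) (by simp)
  have hng : ¬ isGood (gmap T) := fun h => h1ng h.1
  -- round trip
  have hfmin' : fmin (gmap T) = e₀ + 1 := by
    apply fmin_eq
    · rw [hg]; exact Finset.mem_insert_self _ _
    · intro x hx
      rw [mem_Aset_iff] at hmem
      obtain ⟨-, m', hm', hm'o, hm'min⟩ := hmem
      -- e₀+1 is THE min; reuse the bound proved in hmem
      rw [hg] at hx
      rcases Finset.mem_insert.mp hx with rfl | hx
      · exact le_rfl
      obtain ⟨hxe₀, hx'⟩ := Finset.mem_erase.mp hx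
      obtain ⟨hx1, hxT⟩ := Finset.mem_erase.mp hx'
      by_cases hxo : Odd x
      · have hxm : x % 2 = 1 := Nat.odd_iff.mp hxo
        have := hgap x hxT hxo (by omega)
        omega
      · have hxE : x ∈ E := Finset.mem_filter.mpr ⟨hxT, hxo⟩
        have := he₀min x hxE
        omega
  have hround : gmap (gmap T) = T := by
    conv_lhs => rw [gmap]
    rw [if_neg h1ng, hfmin']
    have h5 : e₀ + 1 - 1 = e₀ := by omega
    rw [h5, hg, Finset.erase_insert hnot, Finset.insert_erase he₀e1, Finset.insert_erase h1]
  exact ⟨hmem, hoc, hec, hng, h1ng, hround⟩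

-- ===== chunk 4: phi and psi =====

noncomputable def fup (x : ℕ) : ℕ := if Odd x then x + 2 else x
noncomputable def fdn (x : ℕ) : ℕ := if Odd x then x - 2 else x

noncomputable def phi (T : Finset ℕ) : Finset ℕ := insert 1 (T.image fup)
noncomputable def psi (T : Finset ℕ) : Finset ℕ := (T.erase 1).image fdn

lemma fup_odd {x : ℕ} (h : Odd x) : fup x = x + 2 := by unfold fup; rw [if_pos h]
lemma fup_even {x : ℕ} (h : ¬ Odd x) : fup x = x := by unfold fup; rw [if_neg h]
lemma fdn_odd {x : ℕ} (h : Odd x) : fdn x = x - 2 := by unfold fdn; rw [if_pos h]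
lemma fdn_even {x : ℕ} (h : ¬ Odd x) : fdn x = x := by unfold fdn; rw [if_neg h]

lemma fup_parity (x : ℕ) : Odd (fup x) ↔ Odd x := by
  by_cases h : Odd x
  · rw [fup_odd h, Nat.odd_iff, Nat.odd_iff]
    omega
  · rw [fup_even h]

lemma fdn_parity {x : ℕ} (hx : 2 ≤ x) : Odd (fdn x) ↔ Odd x := by
  by_cases h : Odd x
  · rw [fdn_odd h, Nat.odd_iff, Nat.odd_iff]
    omega
  · rw [fdn_even h]

lemma fup_ge (x : ℕ) : x ≤ fup x := by
  by_cases h : Odd x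
  · rw [fup_odd h]; omega
  · rw [fup_even h]

lemma phi_spec {n j : ℕ} (hn : 2 ≤ n) (hj : 1 ≤ j) (h2j : 2*j ≤ n) {T : Finset ℕ}
    (hT : T ∈ Aset (n+1-2*j)) (hoc : ocount T = j - 1) :
    phi T ∈ Aset n ∧ ocount (phi T) = j ∧ ecount (phi T) = ecount T ∧ isGood (phi T) ∧
      psi (phi T) = T := by
  rw [mem_Aset_iff] at hT
  obtain ⟨hsum, m₀, hm₀, hm₀o, hmin⟩ := hT
  have hm₀1 : 1 ≤ m₀ := hm₀o.pos
  have hinj : ∀ x ∈ T, ∀ y ∈ T, fup x = fup y → x = y := by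
    intro x _ y _ hxy
    by_cases hx : Odd x <;> by_cases hy : Odd y <;>
      [rw [fup_odd hx, fup_odd hy] at hxy;
       rw [fup_odd hx, fup_even hy] at hxy;
       rw [fup_even hx, fup_odd hy] at hxy;
       rw [fup_even hx, fup_even hy] at hxy] <;>
      rw [Nat.odd_iff] at hx hy <;> omega
  have hinj' : Set.InjOn fup ↑T := fun x hx y hy => hinj x hx y hy
  have h1img : 1 ∉ T.image fup := by
    intro h
    obtain ⟨y, hy, heq⟩ := Finset.mem_image.mp h
    have hym : m₀ ≤ y := hmin y hy
    by_cases hyo : Odd y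
    · rw [fup_odd hyo] at heq; omega
    · rw [fup_even hyo] at heq
      subst heq
      exact hyo odd_one'
  have hsumf : ∑ x ∈ T, fup x = T.sum id + 2 * ocount T := by
    have hpt : ∀ x ∈ T, fup x = x + (if Odd x then 2 else 0) := by
      intro x _
      by_cases h : Odd x
      · rw [fup_odd h, if_pos h]
      · rw [fup_even h, if_neg h]
        omega
    rw [Finset.sum_congr rfl hpt, Finset.sum_add_distrib]
    have h8 : ∑ x ∈ T, (if Odd x then (2:ℕ) else 0) = 2 * ocount T := by
      rw [← Finset.sum_filter, Finset.sum_const, smul_eq_mul]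
      unfold ocount; ring
    rw [h8]
    rfl
  have hsum' : (phi T).sum id = n := by
    unfold phi
    rw [Finset.sum_insert h1img, Finset.sum_image hinj]
    simp only [id_eq]
    have h9 : ∑ x ∈ T, fup x = (n + 1 - 2*j) + 2 * (j-1) := by rw [hsumf, hoc, hsum]
    omega
  have hmem : phi T ∈ Aset n := by
    rw [mem_Aset_iff]
    refine ⟨hsum', 1, Finset.mem_insert_self _ _, odd_one', ?_⟩
    intro x hx
    rcases Finset.mem_insert.mp hx with rfl | hx
    · exact le_rfl
    obtain ⟨y, hy, rfl⟩ := Finset.mem_image.mp hx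
    have h11 := hmin y hy
    have h12 := fup_ge y
    omega
  -- ocount
  have hfo : (phi T).filter (fun x => Odd x)
      = insert 1 ((T.filter (fun x => Odd x)).image fup) := by
    unfold phi
    rw [filter_odd_insert_odd odd_one', Finset.filter_image]
    congr 2
    exact Finset.filter_congr (fun x _ => by rw [fup_parity x])
  have hoc' : ocount (phi T) = j := by
    unfold ocount
    rw [hfo, Finset.card_insert_of_notMem (fun h => h1img
      (Finset.image_subset_image (Finset.filter_subset _ _) h)),
      Finset.card_image_of_injOn (hinj'.mono (by
        intro x hx
        exact Finset.mem_coe.mpr (Finset.mem_filter.mp (Finset.mem_coe.mp hx)).1))]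
    unfold ocount at hoc
    omega
  -- ecount
  have hfe : (phi T).filter (fun x => ¬ Odd x) = T.filter (fun x => ¬ Odd x) := by
    unfold phi
    rw [filter_even_insert_odd odd_one', Finset.filter_image]
    have h2 : T.filter (fun a => ¬ Odd (fup a)) = T.filter (fun a => ¬ Odd a) :=
      Finset.filter_congr (fun x _ => by rw [fup_parity x])
    rw [h2]
    apply Finset.image_congr (g := id) (fun x hx => ?_) |>.trans Finset.image_id
    have hxe : ¬ Odd x := (Finset.mem_filter.mp (Finset.mem_coe.mp hx)).2
    rw [fup_even hxe, id_eq]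
  have hec : ecount (phi T) = ecount T := by unfold ecount; rw [hfe]
  -- isGood
  have hm₀img : m₀ + 2 ∈ phi T := by
    unfold phi
    apply Finset.mem_insert_of_mem
    exact Finset.mem_image.mpr ⟨m₀, hm₀, fup_odd hm₀o⟩
  have hm₀2o : Odd (m₀ + 2) := by rw [Nat.odd_iff] at hm₀o ⊢; omega
  have hgood : isGood (phi T) := by
    refine ⟨Finset.mem_insert_self _ _, ⟨m₀ + 2, hm₀img, hm₀2o, by omega⟩, ?_⟩
    intro x hx hxe
    have hx' : x ∈ T.image fup := by
      rcases Finset.mem_insert.mp hx with rfl | h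
      · exact absurd odd_one' hxe
      · exact h
    obtain ⟨y, hy, rfl⟩ := Finset.mem_image.mp hx'
    have hye : ¬ Odd y := by
      intro h
      exact hxe ((fup_parity y).mpr h)
    have hfy : fup y = y := fup_even hye
    have hm₀y : m₀ ≤ y := hmin y hy
    have hm₀y' : m₀ ≠ y := by
      intro h; subst h; exact hye hm₀o
    refine ⟨m₀ + 2, hm₀img, hm₀2o, by omega, ?_⟩
    rw [hfy]; omega
  -- round trip
  have hround : psi (phi T) = T := by
    unfold psi phi
    rw [Finset.erase_insert h1img, Finset.image_image]
    apply Finset.image_congr (g := id) (fun x hx => ?_) |>.trans Finset.image_id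
    simp only [Function.comp, id_eq]
    by_cases h : Odd x
    · rw [fup_odd h, fdn_odd (by rw [Nat.odd_iff] at h ⊢; omega)]
      omega
    · rw [fup_even h, fdn_even h]
  exact ⟨hmem, hoc', hec, hgood, hround⟩

-- ===== chunk 5: psi_spec =====

lemma psi_spec {n j : ℕ} (hn : 2 ≤ n) (hj : 1 ≤ j) (h2j : 2*j ≤ n) {T : Finset ℕ}
    (hT : T ∈ Aset n) (hoc : ocount T = j) (hgood : isGood T) :
    psi T ∈ Aset (n+1-2*j) ∧ ocount (psi T) = j - 1 ∧ ecount (psi T) = ecount T ∧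
      phi (psi T) = T := by
  obtain ⟨h1, ⟨p₀, hp₀T, hp₀o, hp₀3⟩, hC⟩ := hgood
  rw [mem_Aset_iff] at hT
  obtain ⟨hsum, m₀, hm₀, hm₀o, hmin⟩ := hT
  have hodd3 : ∀ x ∈ T.erase 1, Odd x → 3 ≤ x := by
    intro x hx hxo
    obtain ⟨hne, hxT⟩ := Finset.mem_erase.mp hx
    rw [Nat.odd_iff] at hxo
    have := hmin x hxT
    have hm₀1 : 1 ≤ m₀ := hm₀o.pos
    omega
  have hinj : ∀ x ∈ T.erase 1, ∀ y ∈ T.erase 1, fdn x = fdn y → x = y := by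
    intro x hx y hy hxy
    by_cases h : Odd x <;> by_cases h' : Odd y
    · have := hodd3 x hx h; have := hodd3 y hy h'
      rw [fdn_odd h, fdn_odd h'] at hxy
      omega
    · have := hodd3 x hx h
      rw [fdn_odd h, fdn_even h'] at hxy
      rw [Nat.odd_iff] at h h'
      omega
    · have := hodd3 y hy h'
      rw [fdn_even h, fdn_odd h'] at hxy
      rw [Nat.odd_iff] at h h'
      omega
    · rw [fdn_even h, fdn_even h'] at hxy
      exact hxy
  have hinj' : Set.InjOn fdn ↑(T.erase 1) := fun x hx y hy => hinj x hx y hy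
  -- odd filter of erase
  have hofe : (T.erase 1).filter (fun x => Odd x) = (T.filter (fun x => Odd x)).erase 1 :=
    Finset.filter_erase _ _ _
  have h1fo : 1 ∈ T.filter (fun x => Odd x) := Finset.mem_filter.mpr ⟨h1, odd_one'⟩
  have hcardo : ((T.erase 1).filter (fun x => Odd x)).card = j - 1 := by
    rw [hofe, Finset.card_erase_of_mem h1fo]
    unfold ocount at hoc
    omega
  -- p₀ in the erased odd filter
  have hp₀e : p₀ ∈ (T.erase 1).filter (fun x => Odd x) :=
    Finset.mem_filter.mpr ⟨Finset.mem_erase.mpr ⟨by omega, hp₀T⟩, hp₀o⟩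
  have hOne : ((T.erase 1).filter (fun x => Odd x)).Nonempty := ⟨p₀, hp₀e⟩
  obtain ⟨hk₀mem, hk₀min⟩ := fmin_spec hOne
  set k₀ := fmin ((T.erase 1).filter (fun x => Odd x)) with hk₀
  have hk₀e : k₀ ∈ T.erase 1 := (Finset.mem_filter.mp hk₀mem).1
  have hk₀o : Odd k₀ := (Finset.mem_filter.mp hk₀mem).2
  have hk₀3 : 3 ≤ k₀ := hodd3 k₀ hk₀e hk₀o
  -- sum
  have hsumf : ∑ x ∈ T.erase 1, fdn x + 2 * (j-1) = ∑ x ∈ T.erase 1, x := by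
    have hpt : ∀ x ∈ T.erase 1, fdn x + (if Odd x then 2 else 0) = x := by
      intro x hx
      by_cases h : Odd x
      · have := hodd3 x hx h
        rw [fdn_odd h, if_pos h]
        omega
      · rw [fdn_even h, if_neg h]
        omega
    have h8 : ∑ x ∈ T.erase 1, (if Odd x then (2:ℕ) else 0) = 2 * (j - 1) := by
      rw [← Finset.sum_filter, Finset.sum_const, smul_eq_mul, hcardo]
      ring
    rw [← Finset.sum_congr rfl hpt, Finset.sum_add_distrib, h8]
  have hsumer : (1 : ℕ) + ∑ x ∈ T.erase 1, x = n := by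
    have h3 := Finset.add_sum_erase T id h1
    have hTsum : ∑ x ∈ T, x = n := by simpa [id_eq] using hsum
    simp only [id_eq] at h3
    omega
  have hsum' : (psi T).sum id = n + 1 - 2*j := by
    unfold psi
    rw [Finset.sum_image hinj]
    simp only [id_eq]
    omega
  -- membership
  have hk₀2mem : k₀ - 2 ∈ psi T := by
    unfold psi
    exact Finset.mem_image.mpr ⟨k₀, hk₀e, fdn_odd hk₀o⟩
  have hmem : psi T ∈ Aset (n+1-2*j) := by
    rw [mem_Aset_iff]
    refine ⟨hsum', k₀ - 2, hk₀2mem, ?_, ?_⟩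
    · rw [Nat.odd_iff] at hk₀o ⊢; omega
    · intro x hx
      obtain ⟨y, hy, rfl⟩ := Finset.mem_image.mp hx
      by_cases h : Odd y
      · have := hk₀min y (Finset.mem_filter.mpr ⟨hy, h⟩)
        rw [fdn_odd h]
        omega
      · rw [fdn_even h]
        obtain ⟨q, hqT, hqo, hq3, hqle⟩ := hC y (Finset.mem_of_mem_erase hy) h
        have hqe : q ∈ (T.erase 1).filter (fun x => Odd x) :=
          Finset.mem_filter.mpr ⟨Finset.mem_erase.mpr ⟨by omega, hqT⟩, hqo⟩
        have := hk₀min q hqe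
        omega
  -- ocount
  have hfo : (psi T).filter (fun x => Odd x)
      = ((T.erase 1).filter (fun x => Odd x)).image fdn := by
    unfold psi
    rw [Finset.filter_image]
    congr 1
    apply Finset.filter_congr
    intro x hx
    have hx2 : 2 ≤ x := by
      by_cases h : Odd x
      · have := hodd3 x hx h; omega
      · obtain ⟨hne, hxT⟩ := Finset.mem_erase.mp hx
        rw [Nat.odd_iff] at h
        have hm₀1 : 1 ≤ m₀ := hm₀o.pos
        have := hmin x hxT
        omega
    rw [fdn_parity hx2]
  have hoc' : ocount (psi T) = j - 1 := by
    unfold ocount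
    rw [hfo, Finset.card_image_of_injOn (hinj'.mono (by
      intro x hx
      exact Finset.mem_coe.mpr (Finset.mem_filter.mp (Finset.mem_coe.mp hx)).1)), hcardo]
  -- ecount
  have hfe : (psi T).filter (fun x => ¬ Odd x) = T.filter (fun x => ¬ Odd x) := by
    unfold psi
    rw [Finset.filter_image]
    have h2 : (T.erase 1).filter (fun a => ¬ Odd (fdn a)) = (T.erase 1).filter (fun a => ¬ Odd a) := by
      apply Finset.filter_congr
      intro x hx
      have hx2 : 2 ≤ x := by
        by_cases h : Odd x
        · have := hodd3 x hx h; omega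
        · obtain ⟨hne, hxT⟩ := Finset.mem_erase.mp hx
          rw [Nat.odd_iff] at h
          have hm₀1 : 1 ≤ m₀ := hm₀o.pos
          have := hmin x hxT
          omega
      rw [fdn_parity hx2]
    rw [h2]
    have h3 : ((T.erase 1).filter (fun a => ¬ Odd a)).image fdn
        = (T.erase 1).filter (fun a => ¬ Odd a) := by
      apply Finset.image_congr (g := id) (fun x hx => ?_) |>.trans Finset.image_id
      have hxe : ¬ Odd x := (Finset.mem_filter.mp (Finset.mem_coe.mp hx)).2
      rw [fdn_even hxe, id_eq]
    rw [h3, Finset.filter_erase, Finset.erase_eq_of_notMem]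
    intro h
    exact (Finset.mem_filter.mp h).2 odd_one'
  have hec : ecount (psi T) = ecount T := by unfold ecount; rw [hfe]
  -- round trip
  have hround : phi (psi T) = T := by
    unfold phi psi
    rw [Finset.image_image]
    have h4 : (T.erase 1).image (fup ∘ fdn) = T.erase 1 := by
      apply Finset.image_congr (g := id) (fun x hx => ?_) |>.trans Finset.image_id
      have hx' : x ∈ T.erase 1 := Finset.mem_coe.mp hx
      simp only [Function.comp, id_eq]
      by_cases h : Odd x
      · have h3x := hodd3 x hx' h
        rw [fdn_odd h, fup_odd (by rw [Nat.odd_iff] at h ⊢; omega)]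
        omega
      · rw [fdn_even h, fup_even h]
    rw [h4, Finset.insert_erase h1]
  exact ⟨hmem, hoc', hec, hround⟩

-- ===== chunk 6: recursion and induction =====

lemma Nsum_rec {n j : ℕ} (hn : 2 ≤ n) (hj : 1 ≤ j) (h2j : 2*j ≤ n) :
    Nsum j n = Nsum (j-1) (n+1-2*j) := by
  unfold Nsum
  rw [← Finset.sum_filter_add_sum_filter_not ((Aset n).filter (fun T => ocount T = j))
    isGood (fun T => (-1:ℤ)^(ecount T))]
  have hbad : ∑ T ∈ ((Aset n).filter (fun T => ocount T = j)).filter (fun T => ¬ isGood T),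
      (-1:ℤ)^(ecount T) = 0 := by
    have hmem' : ∀ T ∈ ((Aset n).filter (fun T => ocount T = j)).filter (fun T => ¬ isGood T),
        gmap T ∈ ((Aset n).filter (fun T => ocount T = j)).filter (fun T => ¬ isGood T) := by
      intro T hT
      obtain ⟨hT1, hbadT⟩ := Finset.mem_filter.mp hT
      obtain ⟨hA, hoc⟩ := Finset.mem_filter.mp hT1
      by_cases h1 : 1 ∈ T
      · obtain ⟨hA', hoc', _, hng, _, _⟩ := caseY hn hA h1 hbadT
        exact Finset.mem_filter.mpr ⟨Finset.mem_filter.mpr ⟨hA', by rw [hoc', hoc]⟩, hng⟩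
      · obtain ⟨hA', hoc', _, hng, _, _⟩ := caseX hn hA h1
        exact Finset.mem_filter.mpr ⟨Finset.mem_filter.mpr ⟨hA', by rw [hoc', hoc]⟩, hng⟩
    apply Finset.sum_involution (fun T _ => gmap T)
    · intro T hT
      obtain ⟨hT1, hbadT⟩ := Finset.mem_filter.mp hT
      obtain ⟨hA, hoc⟩ := Finset.mem_filter.mp hT1
      by_cases h1 : 1 ∈ T
      · obtain ⟨_, _, hec, _, _, _⟩ := caseY hn hA h1 hbadT
        rw [hec, pow_succ]
        ring
      · obtain ⟨_, _, hec, _, _, _⟩ := caseX hn hA h1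
        rw [hec, pow_succ]
        ring
    · intro T hT _
      obtain ⟨hT1, hbadT⟩ := Finset.mem_filter.mp hT
      obtain ⟨hA, hoc⟩ := Finset.mem_filter.mp hT1
      by_cases h1 : 1 ∈ T
      · obtain ⟨_, _, _, _, h1g, _⟩ := caseY hn hA h1 hbadT
        intro heq
        rw [heq] at h1g
        exact h1g h1
      · obtain ⟨_, _, _, _, h1g, _⟩ := caseX hn hA h1
        intro heq
        rw [heq] at h1g
        exact h1 h1g
    · exact hmem'
    · intro T hT
      obtain ⟨hT1, hbadT⟩ := Finset.mem_filter.mp hT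
      obtain ⟨hA, hoc⟩ := Finset.mem_filter.mp hT1
      by_cases h1 : 1 ∈ T
      · exact (caseY hn hA h1 hbadT).2.2.2.2.2
      · exact (caseX hn hA h1).2.2.2.2.2
  have hgood : ∑ T ∈ ((Aset n).filter (fun T => ocount T = j)).filter (fun T => isGood T),
      (-1:ℤ)^(ecount T)
      = ∑ T ∈ (Aset (n+1-2*j)).filter (fun T => ocount T = j-1), (-1:ℤ)^(ecount T) := by
    apply Finset.sum_nbij' psi phi
    · intro T hT
      obtain ⟨hT1, hgoodT⟩ := Finset.mem_filter.mp hT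
      obtain ⟨hA, hoc⟩ := Finset.mem_filter.mp hT1
      obtain ⟨hA', hoc', _, _⟩ := psi_spec hn hj h2j hA hoc hgoodT
      exact Finset.mem_filter.mpr ⟨hA', hoc'⟩
    · intro T hT
      obtain ⟨hA, hoc⟩ := Finset.mem_filter.mp hT
      obtain ⟨hA', hoc', _, hgood', _⟩ := phi_spec hn hj h2j hA hoc
      exact Finset.mem_filter.mpr ⟨Finset.mem_filter.mpr ⟨hA', hoc'⟩, hgood'⟩
    · intro T hT
      obtain ⟨hT1, hgoodT⟩ := Finset.mem_filter.mp hT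
      obtain ⟨hA, hoc⟩ := Finset.mem_filter.mp hT1
      exact (psi_spec hn hj h2j hA hoc hgoodT).2.2.2
    · intro T hT
      obtain ⟨hA, hoc⟩ := Finset.mem_filter.mp hT
      exact (phi_spec hn hj h2j hA hoc).2.2.2.2
    · intro T hT
      obtain ⟨hT1, hgoodT⟩ := Finset.mem_filter.mp hT
      obtain ⟨hA, hoc⟩ := Finset.mem_filter.mp hT1
      obtain ⟨_, _, hec, _⟩ := psi_spec hn hj h2j hA hoc hgoodT
      rw [hec]
  rw [hbad, hgood, add_zero]

theorem Nsum_eq : ∀ n, 1 ≤ n → ∀ j, Nsum j n = if n = j^2 then 1 else 0 := by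
  intro n
  induction n using Nat.strong_induction_on with
  | _ n ih =>
    intro hn j
    rcases Nat.eq_or_lt_of_le hn with h1 | h2
    · -- n = 1
      rw [← h1]
      exact Nsum_one j
    · -- n ≥ 2
      have hn2 : 2 ≤ n := h2
      rcases Nat.eq_zero_or_pos j with rfl | hj
      · rw [Nsum_zero (by omega), if_neg (by simpa using by omega)]
      by_cases h2j : 2*j ≤ n
      · rw [Nsum_rec hn2 hj h2j]
        have hm1 : 1 ≤ n + 1 - 2*j := by omega
        have hmlt : n + 1 - 2*j < n := by omega
        rw [ih _ hmlt hm1 (j-1)]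
        obtain ⟨k, rfl⟩ : ∃ k, j = k + 1 := ⟨j - 1, by omega⟩
        have hiff : (n + 1 - 2*(k+1) = (k+1-1)^2) ↔ (n = (k+1)^2) := by
          have h3 : (k+1)^2 = k^2 + 2*k + 1 := by ring
          have h4 : (k+1-1)^2 = k^2 := by norm_num
          rw [h4, h3]
          omega
        by_cases hsq : n = (k+1)^2
        · rw [if_pos (hiff.mpr hsq), if_pos hsq]
        · rw [if_neg (fun h => hsq (hiff.mp h)), if_neg hsq]
      · -- n < 2j : the fiber is empty since n < j²
        have hjj : n < j^2 := by
          have h5 : 2*j ≤ j^2 ∨ j = 1 := by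
            rcases Nat.eq_or_lt_of_le hj with h | h
            · right; omega
            · left; nlinarith
          rcases h5 with h5 | h5
          · omega
          · subst h5; omega
        rw [Nsum_of_lt_sq hjj, if_neg (by omega)]


-- ===== chunk 7: 0-toggle reduction from Qset to Aset =====

lemma mem_Qset_iff {n : ℕ} {S : Finset ℕ} :
    S ∈ Qset n ↔ S.sum id = n ∧ ∃ m ∈ S, Even m ∧ ∀ x ∈ S, m ≤ x := by
  unfold Qset
  rw [Finset.mem_filter, Finset.mem_powerset]
  constructor
  · rintro ⟨-, h⟩; exact h
  · rintro ⟨h1, h2⟩; exact ⟨subset_range_of_sum h1, h1, h2⟩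

lemma min_unique {S : Finset ℕ} {a b : ℕ} (ha : a ∈ S) (hmina : ∀ x ∈ S, a ≤ x)
    (hb : b ∈ S) (hminb : ∀ x ∈ S, b ≤ x) : a = b :=
  le_antisymm (hmina b hb) (hminb a ha)

lemma Qset_nonempty {n : ℕ} (hn : 1 ≤ n) {S : Finset ℕ} (hsum : S.sum id = n) :
    S.Nonempty := by
  rcases Finset.eq_empty_or_nonempty S with rfl | h
  · simp at hsum; omega
  · exact h

lemma ocount_erase_zero (S : Finset ℕ) : ocount (S.erase 0) = ocount S := by
  unfold ocount
  rw [Finset.filter_erase, Finset.erase_eq_of_notMem]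
  intro h
  have := (Finset.mem_filter.mp h).2
  rw [Nat.odd_iff] at this
  omega

lemma ocount_insert_zero {S : Finset ℕ} (h : 0 ∉ S) : ocount (insert 0 S) = ocount S := by
  unfold ocount
  rw [filter_odd_insert_even (by rw [Nat.odd_iff]; omega)]

lemma sum_erase_zero (S : Finset ℕ) : (S.erase 0).sum id = S.sum id := by
  by_cases h : 0 ∈ S
  · exact Finset.sum_erase _ rfl
  · rw [Finset.erase_eq_of_notMem h]

lemma qsum_eq_asum (n : ℕ) (hn : 1 ≤ n) :
    ∑ S ∈ Qset n, (-1 : Polynomial ℤ) ^ (S.card - 1) * Polynomial.X ^ (ocount S)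
      = ∑ T ∈ Aset n, (-1 : Polynomial ℤ) ^ (T.card) * Polynomial.X ^ (ocount T) := by
  set P : Finset ℕ → Prop :=
    fun S => ∃ m ∈ S.erase 0, Odd m ∧ ∀ x ∈ S.erase 0, m ≤ x with hP
  rw [← Finset.sum_filter_add_sum_filter_not (Qset n) P
    (fun S => (-1 : Polynomial ℤ) ^ (S.card - 1) * Polynomial.X ^ (ocount S))]
  have hrest : ∑ S ∈ (Qset n).filter (fun S => ¬ P S),
      (-1 : Polynomial ℤ) ^ (S.card - 1) * Polynomial.X ^ (ocount S) = 0 := by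
    have key : ∀ S ∈ (Qset n).filter (fun S => ¬ P S),
        (if 0 ∈ S then S.erase 0 else insert 0 S) ∈ (Qset n).filter (fun S => ¬ P S) ∧
        ((-1 : Polynomial ℤ) ^ (S.card - 1) * Polynomial.X ^ (ocount S) +
          (-1 : Polynomial ℤ) ^ ((if 0 ∈ S then S.erase 0 else insert 0 S).card - 1) *
            Polynomial.X ^ (ocount (if 0 ∈ S then S.erase 0 else insert 0 S)) = 0) ∧
        (if 0 ∈ S then S.erase 0 else insert 0 S) ≠ S := by
      intro S hS
      obtain ⟨hQ, hnP⟩ := Finset.mem_filter.mp hS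
      rw [mem_Qset_iff] at hQ
      obtain ⟨hsum, m, hm, hme, hmin⟩ := hQ
      have hSne : S.Nonempty := Qset_nonempty hn hsum
      by_cases h0 : 0 ∈ S
      · rw [if_pos h0]
        -- the erased set
        have hesum : (S.erase 0).sum id = n := by rw [sum_erase_zero, hsum]
        have hene : (S.erase 0).Nonempty := Qset_nonempty hn hesum
        obtain ⟨hfm, hfmin⟩ := fmin_spec hene
        set m₁ := fmin (S.erase 0) with hm₁
        have hm₁even : ¬ Odd m₁ := by
          intro ho
          exact hnP ⟨m₁, hfm, ho, hfmin⟩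
        have hQ' : S.erase 0 ∈ Qset n := by
          rw [mem_Qset_iff]
          exact ⟨hesum, m₁, hfm, Nat.not_odd_iff_even.mp hm₁even, hfmin⟩
        have hnP' : ¬ P (S.erase 0) := by
          rw [hP]
          rintro ⟨m', hm', hm'o, hm'min⟩
          rw [Finset.erase_idem] at hm' hm'min
          have := min_unique hfm hfmin hm' hm'min
          rw [this] at hm₁even
          exact hm₁even hm'o
        have hcard2 : 2 ≤ S.card := by
          obtain ⟨x, hx, hxne⟩ : ∃ x ∈ S, x ≠ 0 := by
            by_contra hcon
            push_neg at hcon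
            have : S.sum id = 0 := Finset.sum_eq_zero (fun x hx => hcon x hx)
            omega
          exact Finset.one_lt_card.mpr ⟨0, h0, x, hx, fun h => hxne h.symm⟩
        have hec : S.card = (S.erase 0).card + 1 := by
          rw [Finset.card_erase_of_mem h0]; omega
        refine ⟨Finset.mem_filter.mpr ⟨hQ', hnP'⟩, ?_, ?_⟩
        · rw [ocount_erase_zero, hec]
          have h9 : (S.erase 0).card + 1 - 1 = ((S.erase 0).card - 1) + 1 := by
            have : 1 ≤ (S.erase 0).card := Finset.card_pos.mpr hene
            omega
          rw [h9, pow_succ]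
          ring
        · intro h
          have : 0 ∈ S.erase 0 := h.symm ▸ h0
          exact absurd this (by simp)
      · rw [if_neg h0]
        have hisum : (insert 0 S).sum id = n := by
          rw [Finset.sum_insert h0, hsum]; simp
        have hQ' : insert 0 S ∈ Qset n := by
          rw [mem_Qset_iff]
          exact ⟨hisum, 0, Finset.mem_insert_self _ _, Even.zero, fun x _ => Nat.zero_le x⟩
        have hnP' : ¬ P (insert 0 S) := by
          rw [hP]
          rintro ⟨m', hm', hm'o, hm'min⟩
          rw [Finset.erase_insert h0] at hm' hm'min
          have := min_unique hm hmin hm' hm'min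
          subst this
          rw [Nat.odd_iff] at hm'o
          rw [Nat.even_iff] at hme
          omega
        have hcard1 : 1 ≤ S.card := Finset.card_pos.mpr hSne
        refine ⟨Finset.mem_filter.mpr ⟨hQ', hnP'⟩, ?_, ?_⟩
        · rw [ocount_insert_zero h0, Finset.card_insert_of_notMem h0]
          have h9 : S.card + 1 - 1 = (S.card - 1) + 1 := by omega
          rw [h9, pow_succ]
          ring
        · intro h
          have : 0 ∈ S := h ▸ Finset.mem_insert_self 0 S
          exact h0 this
    refine Finset.sum_involution (fun S _ => if 0 ∈ S then S.erase 0 else insert 0 S)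
      (fun S hS => (key S hS).2.1) (fun S hS _ => (key S hS).2.2)
      (fun S hS => (key S hS).1) (fun S hS => ?_)
    by_cases h0 : 0 ∈ S
    · simp only [if_pos h0]
      rw [if_neg (by simp), Finset.insert_erase h0]
    · simp only [if_neg h0]
      rw [if_pos (Finset.mem_insert_self 0 S), Finset.erase_insert h0]
  rw [hrest, add_zero]
  -- bijection between D and Aset n
  apply Finset.sum_nbij' (fun S => S.erase 0) (fun T => insert 0 T)
  · intro S hS
    obtain ⟨hQ, hPS⟩ := Finset.mem_filter.mp hS
    rw [mem_Qset_iff] at hQ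
    obtain ⟨hsum, -⟩ := hQ
    rw [hP] at hPS
    obtain ⟨m', hm', hm'o, hm'min⟩ := hPS
    rw [mem_Aset_iff]
    exact ⟨by rw [sum_erase_zero, hsum], m', hm', hm'o, hm'min⟩
  · intro T hT
    rw [mem_Aset_iff] at hT
    obtain ⟨hsum, m₀, hm₀, hm₀o, hmin⟩ := hT
    have h0T : 0 ∉ T := by
      intro h
      have := hmin 0 h
      have := Nat.odd_iff.mp hm₀o
      omega
    apply Finset.mem_filter.mpr
    constructor
    · rw [mem_Qset_iff]
      refine ⟨by rw [Finset.sum_insert h0T, hsum]; simp, 0, Finset.mem_insert_self _ _,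
        Even.zero, fun x _ => Nat.zero_le x⟩
    · show ∃ m ∈ (insert 0 T).erase 0, Odd m ∧ ∀ x ∈ (insert 0 T).erase 0, m ≤ x
      rw [Finset.erase_insert h0T]
      exact ⟨m₀, hm₀, hm₀o, hmin⟩
  · intro S hS
    obtain ⟨hQ, hPS⟩ := Finset.mem_filter.mp hS
    rw [mem_Qset_iff] at hQ
    obtain ⟨hsum, m, hm, hme, hmin⟩ := hQ
    -- 0 ∈ S
    have h0S : 0 ∈ S := by
      by_contra h0
      rw [hP] at hPS
      obtain ⟨m', hm', hm'o, hm'min⟩ := hPS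
      rw [Finset.erase_eq_of_notMem h0] at hm' hm'min
      have := min_unique hm hmin hm' hm'min
      subst this
      rw [Nat.odd_iff] at hm'o
      rw [Nat.even_iff] at hme
      omega
    rw [Finset.insert_erase h0S]
  · intro T hT
    rw [mem_Aset_iff] at hT
    obtain ⟨hsum, m₀, hm₀, hm₀o, hmin⟩ := hT
    have h0T : 0 ∉ T := by
      intro h
      have := hmin 0 h
      have := Nat.odd_iff.mp hm₀o
      omega
    rw [Finset.erase_insert h0T]
  · intro S hS
    obtain ⟨hQ, hPS⟩ := Finset.mem_filter.mp hS
    rw [mem_Qset_iff] at hQ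
    obtain ⟨hsum, m, hm, hme, hmin⟩ := hQ
    have h0S : 0 ∈ S := by
      by_contra h0
      rw [hP] at hPS
      obtain ⟨m', hm', hm'o, hm'min⟩ := hPS
      rw [Finset.erase_eq_of_notMem h0] at hm' hm'min
      have := min_unique hm hmin hm' hm'min
      subst this
      rw [Nat.odd_iff] at hm'o
      rw [Nat.even_iff] at hme
      omega
    rw [ocount_erase_zero, Finset.card_erase_of_mem h0S]

-- ===== chunk 8: final evaluation =====

lemma ocount_le {n : ℕ} {T : Finset ℕ} (hT : T ∈ Aset n) : ocount T ≤ n := by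
  rw [mem_Aset_iff] at hT
  obtain ⟨hsum, -⟩ := hT
  have hodd : ∀ x ∈ T.filter (fun x => Odd x), Odd x := fun x hx => (Finset.mem_filter.mp hx).2
  have hle := card_sq_le_sum_of_odd _ _ rfl hodd
  have hsub : (T.filter (fun x => Odd x)).sum id ≤ T.sum id :=
    Finset.sum_le_sum_of_subset (Finset.filter_subset _ _)
  unfold ocount
  nlinarith [Finset.card_pos (s := T.filter (fun x => Odd x))]

lemma asum_eval (n : ℕ) (hn : 1 ≤ n) :
    ∑ T ∈ Aset n, (-1 : Polynomial ℤ) ^ (T.card) * Polynomial.X ^ (ocount T)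
      = if IsSquare n then (-(Polynomial.X : Polynomial ℤ)) ^ (Nat.sqrt n) else 0 := by
  have hterm : ∀ T ∈ Aset n,
      (-1 : Polynomial ℤ) ^ (T.card) * Polynomial.X ^ (ocount T)
        = (-1 : Polynomial ℤ) ^ (ecount T) * (-(Polynomial.X : Polynomial ℤ)) ^ (ocount T) := by
    intro T _
    have hce : ocount T + ecount T = T.card := by
      unfold ocount ecount
      exact Finset.card_filter_add_card_filter_not _
    rw [← hce, pow_add, neg_pow]
    ring
  rw [Finset.sum_congr rfl hterm]
  have hmaps : ∀ T ∈ Aset n, ocount T ∈ Finset.range (n + 1) := by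
    intro T hT
    rw [Finset.mem_range]
    have := ocount_le hT
    omega
  rw [← Finset.sum_fiberwise_of_maps_to hmaps
    (fun T => (-1 : Polynomial ℤ) ^ (ecount T) * (-(Polynomial.X : Polynomial ℤ)) ^ (ocount T))]
  have hinner : ∀ j ∈ Finset.range (n + 1),
      ∑ T ∈ (Aset n).filter (fun T => ocount T = j),
        (-1 : Polynomial ℤ) ^ (ecount T) * (-(Polynomial.X : Polynomial ℤ)) ^ (ocount T)
      = if n = j ^ 2 then (-(Polynomial.X : Polynomial ℤ)) ^ j else 0 := by
    intro j _
    have h1 : ∀ T ∈ (Aset n).filter (fun T => ocount T = j),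
        (-1 : Polynomial ℤ) ^ (ecount T) * (-(Polynomial.X : Polynomial ℤ)) ^ (ocount T)
        = (-1 : Polynomial ℤ) ^ (ecount T) * (-(Polynomial.X : Polynomial ℤ)) ^ j := by
      intro T hT
      rw [(Finset.mem_filter.mp hT).2]
    rw [Finset.sum_congr rfl h1, ← Finset.sum_mul]
    have h2 : ∑ T ∈ (Aset n).filter (fun T => ocount T = j), (-1 : Polynomial ℤ) ^ (ecount T)
        = ((Nsum j n : ℤ) : Polynomial ℤ) := by
      unfold Nsum
      push_cast
      rfl
    rw [h2, Nsum_eq n hn j]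
    by_cases h : n = j ^ 2
    · rw [if_pos h, if_pos h]
      push_cast
      ring
    · rw [if_neg h, if_neg h]
      push_cast
      ring
  rw [Finset.sum_congr rfl hinner]
  by_cases hsq : IsSquare n
  · obtain ⟨r, hr⟩ := hsq
    have hr2 : n = r ^ 2 := by rw [hr]; ring
    have hr1 : 1 ≤ r := by
      rcases Nat.eq_zero_or_pos r with rfl | h
      · omega
      · exact h
    have hrn : r ≤ n := by nlinarith
    have hsqrt : Nat.sqrt n = r := by rw [hr2, Nat.sqrt_eq']
    rw [if_pos ⟨r, hr⟩, hsqrt]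
    rw [Finset.sum_eq_single r]
    · rw [if_pos hr2]
    · intro j _ hjr
      rw [if_neg]
      intro h
      have : j ^ 2 = r ^ 2 := by omega
      exact hjr (Nat.pow_left_injective (by norm_num) this)
    · intro h
      exact absurd (Finset.mem_range.mpr (by omega)) h
  · rw [if_neg hsq]
    apply Finset.sum_eq_zero
    intro j _
    rw [if_neg]
    intro h
    exact hsq ⟨j, by rw [h]; ring⟩

end WQT


open scoped Classical in
/-- `∑_{λ ∈ Q(n)} (-1)^{ℓ(λ)-1} a^{ℓ_o(λ)} = (-a)^k` if `n = k²` and `0` otherwise. -/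
theorem weighted_Q_theorem (n : ℕ) (hn : 1 ≤ n) :
    ∑ S ∈ Qset n,
      (-1 : Polynomial ℤ) ^ (S.card - 1) *
        Polynomial.X ^ ((S.filter (fun x => Odd x)).card) =
      if IsSquare n then (-(Polynomial.X : Polynomial ℤ)) ^ Nat.sqrt n else 0 := by
  have h1 := WQT.qsum_eq_asum n hn
  have h2 := WQT.asum_eval n hn
  have h3 : ∑ S ∈ Qset n,
      (-1 : Polynomial ℤ) ^ (S.card - 1) *
        Polynomial.X ^ ((S.filter (fun x => Odd x)).card)
      = ∑ S ∈ Qset n, (-1 : Polynomial ℤ) ^ (S.card - 1) * Polynomial.X ^ (WQT.ocount S) := by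
    apply Finset.sum_congr rfl
    intro S _
    congr 1
  rw [h3, h1, h2]
end

section
/- As formal power series in q: ∑_{n≥0} q^{2n} (q^{2n+2};q^2)_∞ (-q^{2n+1};q^2)_∞ = ∑_{k≥0} q^{k^2}. -/
open PowerSeries Finset

namespace AndrewsAux

noncomputable def P (j : ℕ) : PowerSeries ℤ := ∏ i ∈ range j, (1 - X ^ (2*i+2))

lemma constantCoeff_P (j : ℕ) : constantCoeff (R := ℤ) (P j) = 1 := by
  rw [P, map_prod]
  refine Finset.prod_eq_one fun i _ => ?_
  simp

noncomputable def D (j : ℕ) : PowerSeries ℤ := invOfUnit (P j) 1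

lemma P_mul_D (j : ℕ) : P j * D j = 1 :=
  mul_invOfUnit _ _ (by rw [constantCoeff_P]; rfl)

section
variable (N : ℕ)

noncomputable def I : Ideal (PowerSeries ℤ) := Ideal.span {X ^ (N+1)}

abbrev Q := PowerSeries ℤ ⧸ I N

noncomputable def φ : PowerSeries ℤ →+* Q N := Ideal.Quotient.mk (I N)

noncomputable def x : Q N := φ N X

variable {N}

lemma x_pow_zero {k : ℕ} (h : N < k) : x N ^ k = 0 := by
  rw [x, ← map_pow]
  refine Ideal.Quotient.eq_zero_iff_mem.2 ?_
  exact Ideal.mem_span_singleton.2 (pow_dvd_pow X h)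

variable (N)

noncomputable def d (j : ℕ) : Q N := φ N (D j)
noncomputable def p (j : ℕ) : Q N := φ N (P j)

lemma p_eq (j : ℕ) : p N j = ∏ i ∈ range j, (1 - x N ^ (2*i+2)) := by
  rw [p, P, map_prod]
  refine Finset.prod_congr rfl fun i _ => ?_
  rw [map_sub, map_one, map_pow]; rfl

lemma pd (j : ℕ) : p N j * d N j = 1 := by
  rw [p, d, ← map_mul, P_mul_D, map_one]

lemma d_zero : d N 0 = 1 := by
  have h := pd N 0
  rwa [p_eq, range_zero, prod_empty, one_mul] at h

noncomputable def r (n : ℕ) : Q N := ∑ j ∈ range (N+1), x N ^ (j^2+2*n*j) * d N j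
noncomputable def e (a : ℕ) : Q N := ∑ n ∈ range (N+1), x N ^ (2*a*n) * d N n
noncomputable def b (n : ℕ) : Q N := ∏ j ∈ range (N+1), (1 + x N ^ (2*n+1+2*j))
noncomputable def qq (j : ℕ) : Q N := ∏ i ∈ range (N+1-j), (1 - x N ^ (2*(j+1+i)))

variable {N}

lemma dstep (j : ℕ) : (1 - x N ^ (2*j+2)) * d N (j+1) = d N j := by
  have hP : p N (j+1) = p N j * (1 - x N ^ (2*j+2)) := by
    rw [p_eq, p_eq, prod_range_succ]
  calc (1 - x N ^ (2*j+2)) * d N (j+1)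
      = p N j * d N j * ((1 - x N ^ (2*j+2)) * d N (j+1)) := by rw [pd, one_mul]
    _ = d N j * (p N (j+1) * d N (j+1)) := by rw [hP]; ring
    _ = d N j := by rw [pd, mul_one]

lemma rstep (n : ℕ) : r N n = (1 + x N ^ (2*n+1)) * r N (n+1) := by
  have h2 : r N n - r N (n+1)
      = ∑ j ∈ range (N+1), x N ^ (j^2+2*n*j) * ((1 - x N ^ (2*j)) * d N j) := by
    rw [r, r, ← Finset.sum_sub_distrib]
    refine Finset.sum_congr rfl fun j _ => ?_
    have hexp : j^2+2*(n+1)*j = (j^2+2*n*j) + 2*j := by ring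
    rw [hexp, pow_add]; ring
  have h3 : r N n - r N (n+1)
      = (∑ j ∈ range N, x N ^ ((j+1)^2+2*n*(j+1)) * ((1 - x N ^ (2*(j+1))) * d N (j+1)))
        + x N ^ (0^2+2*n*0) * ((1 - x N ^ (2*0)) * d N 0) := by
    rw [h2]; exact Finset.sum_range_succ' _ N
  have h4 : r N n - r N (n+1)
      = ∑ j ∈ range N, x N ^ (2*n+1) * (x N ^ (j^2+2*(n+1)*j) * d N j) := by
    rw [h3]
    have : x N ^ (0^2+2*n*0) * ((1 - x N ^ (2*0)) * d N 0) = 0 := by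
      norm_num
    rw [this, add_zero]
    refine Finset.sum_congr rfl fun j _ => ?_
    have hd : (1 - x N ^ (2*(j+1))) * d N (j+1) = d N j := by
      have := dstep (N := N) j
      have hexp : 2*(j+1) = 2*j+2 := by ring
      rw [hexp]; exact this
    rw [hd]
    have hexp : (j+1)^2+2*n*(j+1) = (2*n+1) + (j^2+2*(n+1)*j) := by ring
    rw [hexp, pow_add, mul_assoc]
  have hsplit : r N (n+1)
      = (∑ j ∈ range N, x N ^ (j^2+2*(n+1)*j) * d N j) + x N ^ (N^2+2*(n+1)*N) * d N N := by
    rw [r]; exact Finset.sum_range_succ _ N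
  have h5 : r N n - r N (n+1) = x N ^ (2*n+1) * r N (n+1) := by
    have hz : x N ^ (2*n+1) * (x N ^ (N^2+2*(n+1)*N) * d N N) = 0 := by
      rw [← mul_assoc, ← pow_add]
      have : N < 2*n+1 + (N^2+2*(n+1)*N) := by nlinarith
      rw [x_pow_zero this, zero_mul]
    rw [h4, ← Finset.mul_sum, hsplit]
    linear_combination -hz
  linear_combination h5

lemma estep (a : ℕ) (ha : 1 ≤ a) : e N (a+1) = (1 - x N ^ (2*a)) * e N a := by
  have h2 : e N a - e N (a+1)
      = ∑ n ∈ range (N+1), x N ^ (2*a*n) * ((1 - x N ^ (2*n)) * d N n) := by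
    rw [e, e, ← Finset.sum_sub_distrib]
    refine Finset.sum_congr rfl fun n _ => ?_
    have hexp : 2*(a+1)*n = 2*a*n + 2*n := by ring
    rw [hexp, pow_add]; ring
  have h4 : e N a - e N (a+1)
      = ∑ n ∈ range N, x N ^ (2*a) * (x N ^ (2*a*n) * d N n) := by
    rw [h2, Finset.sum_range_succ' _ N]
    have h0 : x N ^ (2*a*0) * ((1 - x N ^ (2*0)) * d N 0) = 0 := by norm_num
    rw [h0, add_zero]
    refine Finset.sum_congr rfl fun n _ => ?_
    have hd : (1 - x N ^ (2*(n+1))) * d N (n+1) = d N n := by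
      have := dstep (N := N) n
      have hexp : 2*(n+1) = 2*n+2 := by ring
      rw [hexp]; exact this
    rw [hd]
    have hexp : 2*a*(n+1) = 2*a + 2*a*n := by ring
    rw [hexp, pow_add, mul_assoc]
  have hsplit : e N a
      = (∑ n ∈ range N, x N ^ (2*a*n) * d N n) + x N ^ (2*a*N) * d N N := by
    rw [e]; exact Finset.sum_range_succ _ N
  have h5 : e N a - e N (a+1) = x N ^ (2*a) * e N a := by
    have hz : x N ^ (2*a) * (x N ^ (2*a*N) * d N N) = 0 := by
      rw [← mul_assoc, ← pow_add]
      have : N < 2*a + 2*a*N := by nlinarith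
      rw [x_pow_zero this, zero_mul]
    rw [h4, ← Finset.mul_sum, hsplit]
    linear_combination -hz
  linear_combination -h5

lemma bstep (n : ℕ) : b N n = (1 + x N ^ (2*n+1)) * b N (n+1) := by
  rw [b, Finset.prod_range_succ' (fun j => 1 + x N ^ (2*n+1+2*j)) N]
  have hb1 : b N (n+1) = ∏ j ∈ range N, (1 + x N ^ (2*(n+1)+1+2*j)) := by
    rw [b, Finset.prod_range_succ]
    have : x N ^ (2*(n+1)+1+2*N) = 0 := x_pow_zero (by omega)
    rw [this, add_zero, mul_one]
  rw [hb1]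
  have : ∀ j, 2*n+1+2*(j+1) = 2*(n+1)+1+2*j := fun j => by ring
  simp only [this, mul_zero, add_zero]
  ring

lemma qqstep {j : ℕ} (hj : j ≤ N) : qq N j = (1 - x N ^ (2*(j+1))) * qq N (j+1) := by
  have h1 : N+1-j = (N-j)+1 := by omega
  have h2 : N+1-(j+1) = N-j := by omega
  rw [qq, h1, Finset.prod_range_succ' (fun i => 1 - x N ^ (2*(j+1+i))) (N-j), qq, h2]
  have : ∀ i, 2*(j+1+(i+1)) = 2*(j+1+1+i) := fun i => by ring
  simp only [this, add_zero]
  ring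


lemma b_base {n : ℕ} (hn : N+1 ≤ n) : b N n = 1 := by
  rw [b]
  refine Finset.prod_eq_one fun j _ => ?_
  rw [x_pow_zero (show N < 2*n+1+2*j by omega), add_zero]

lemma r_base {n : ℕ} (hn : N+1 ≤ n) : r N n = 1 := by
  rw [r, Finset.sum_eq_single_of_mem 0 (Finset.mem_range.2 (by omega))]
  · norm_num [d_zero]
  · intro j _ hj
    have h1 : 1 ≤ j := Nat.one_le_iff_ne_zero.2 hj
    have : N < j^2 + 2*n*j := by nlinarith
    rw [x_pow_zero this, zero_mul]

lemma e_base {a : ℕ} (ha : N+2 ≤ a) : e N a = 1 := by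
  rw [e, Finset.sum_eq_single_of_mem 0 (Finset.mem_range.2 (by omega))]
  · norm_num [d_zero]
  · intro n _ hn
    have h1 : 1 ≤ n := Nat.one_le_iff_ne_zero.2 hn
    have : N < 2*a*n := by nlinarith
    rw [x_pow_zero this, zero_mul]

lemma br (k : ℕ) : ∀ n, N+1 = n + k → b N n = r N n := by
  induction k with
  | zero => intro n h; rw [b_base (by omega), r_base (by omega)]
  | succ k ih =>
    intro n h
    rw [bstep, rstep, ih (n+1) (by omega)]

lemma qe (k : ℕ) : ∀ j, N+1 = j + k → qq N j * e N (j+1) = 1 := by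
  induction k with
  | zero =>
    intro j h
    have hq : qq N j = 1 := by
      rw [qq, show N+1-j = 0 by omega, range_zero, prod_empty]
    rw [hq, one_mul, e_base (by omega)]
  | succ k ih =>
    intro j h
    calc qq N j * e N (j+1)
        = qq N (j+1) * ((1 - x N ^ (2*(j+1))) * e N (j+1)) := by
          rw [qqstep (show j ≤ N by omega)]; ring
      _ = qq N (j+1) * e N (j+2) := by rw [← estep (j+1) (by omega)]
      _ = 1 := ih (j+1) (by omega)

lemma an_eq (n : ℕ) :
    (∏ j ∈ range (N+1), (1 - x N ^ (2*n+2+2*j))) = d N n * p N (N+1) := by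
  have h1 : p N (n+(N+1)) = p N n * ∏ j ∈ range (N+1), (1 - x N ^ (2*n+2+2*j)) := by
    rw [p_eq, p_eq, Finset.prod_range_add]
    congr 1
    refine Finset.prod_congr rfl fun i _ => ?_
    rw [show 2*(n+i)+2 = 2*n+2+2*i by ring]
  have h2 : p N (n+(N+1)) = p N (N+1) := by
    rw [show n+(N+1) = (N+1)+n by ring, p_eq, Finset.prod_range_add, ← p_eq]
    have hone : ∏ i ∈ range n, (1 - x N ^ (2*((N+1)+i)+2)) = 1 := by
      refine Finset.prod_eq_one fun i _ => ?_
      rw [x_pow_zero (show N < 2*((N+1)+i)+2 by omega), sub_zero]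
    rw [hone, mul_one]
  calc (∏ j ∈ range (N+1), (1 - x N ^ (2*n+2+2*j)))
      = (p N n * d N n) * ∏ j ∈ range (N+1), (1 - x N ^ (2*n+2+2*j)) := by
        rw [pd, one_mul]
    _ = d N n * (p N n * ∏ j ∈ range (N+1), (1 - x N ^ (2*n+2+2*j))) := by ring
    _ = d N n * p N (n+(N+1)) := by rw [h1]
    _ = d N n * p N (N+1) := by rw [h2]

lemma p_split {j : ℕ} (hj : j ≤ N) : p N (N+1) = p N j * qq N j := by
  rw [p_eq, show N+1 = j+(N+1-j) by omega, Finset.prod_range_add, ← p_eq, qq]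
  congr 1
  refine Finset.prod_congr rfl fun i _ => ?_
  rw [show 2*(j+i)+2 = 2*(j+1+i) by ring]

lemma main_quot :
    (∑ n ∈ range (N+1), x N ^ (2*n)
        * (∏ j ∈ range (N+1), (1 - x N ^ (2*n+2+2*j)))
        * (∏ j ∈ range (N+1), (1 + x N ^ (2*n+1+2*j))))
    = ∑ k ∈ range (N+1), x N ^ (k^2) := by
  have step1 : ∀ n ∈ range (N+1),
      x N ^ (2*n) * (∏ j ∈ range (N+1), (1 - x N ^ (2*n+2+2*j)))
        * (∏ j ∈ range (N+1), (1 + x N ^ (2*n+1+2*j)))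
      = ∑ j ∈ range (N+1), x N ^ (2*n) * (d N n * p N (N+1)) * (x N ^ (j^2+2*n*j) * d N j) := by
    intro n hn
    rw [an_eq, show (∏ j ∈ range (N+1), (1 + x N ^ (2*n+1+2*j))) = b N n from rfl,
        br (N+1-n) n (by have := Finset.mem_range.1 hn; omega), r, Finset.mul_sum]
  rw [Finset.sum_congr rfl step1, Finset.sum_comm]
  refine Finset.sum_congr rfl fun j hj => ?_
  have hjN : j ≤ N := by have := Finset.mem_range.1 hj; omega
  have hterm : ∀ n, x N ^ (2*n) * (d N n * p N (N+1)) * (x N ^ (j^2+2*n*j) * d N j)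
      = x N ^ (j^2) * (p N (N+1) * d N j) * (x N ^ (2*(j+1)*n) * d N n) := by
    intro n
    have hx : x N ^ (2*n) * x N ^ (j^2+2*n*j) = x N ^ (j^2) * x N ^ (2*(j+1)*n) := by
      rw [← pow_add, ← pow_add, show 2*n + (j^2+2*n*j) = j^2 + 2*(j+1)*n by ring]
    linear_combination (d N n * p N (N+1) * d N j) * hx
  rw [Finset.sum_congr rfl (fun n _ => hterm n), ← Finset.mul_sum,
      show (∑ n ∈ range (N+1), x N ^ (2*(j+1)*n) * d N n) = e N (j+1) from rfl,
      p_split hjN]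
  have h1 := pd N j
  have h2 := qe (N := N) (N+1-j) j (by omega)
  calc x N ^ (j^2) * (p N j * qq N j * d N j) * e N (j+1)
      = x N ^ (j^2) * ((p N j * d N j) * (qq N j * e N (j+1))) := by ring
    _ = x N ^ (j^2) := by rw [h1, h2]; ring

end

end AndrewsAux

/-- `∑_{n≥0} q^{2n} (q^{2n+2};q²)_∞ (-q^{2n+1};q²)_∞ = ∑_{k≥0} q^{k²}` as formal power
series in `q` over `ℤ`.  Summands with `n > N` and factors of the infinite products with
index `j > N` have no effect on the `N`-th coefficient, so that coefficient is computed
from the displayed finite truncations. -/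
theorem andrews_specialized (N : ℕ) :
    PowerSeries.coeff (R := ℤ) N
      (∑ n ∈ Finset.range (N + 1),
        PowerSeries.X ^ (2 * n) *
          (∏ j ∈ Finset.range (N + 1), (1 - PowerSeries.X ^ (2 * n + 2 + 2 * j))) *
          (∏ j ∈ Finset.range (N + 1), (1 + PowerSeries.X ^ (2 * n + 1 + 2 * j)))) =
    PowerSeries.coeff (R := ℤ) N
      (∑ k ∈ Finset.range (N + 1), PowerSeries.X ^ (k ^ 2)) := by
  classical
  have key : AndrewsAux.φ N
      (∑ n ∈ Finset.range (N + 1),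
        PowerSeries.X ^ (2 * n) *
          (∏ j ∈ Finset.range (N + 1), (1 - PowerSeries.X ^ (2 * n + 2 + 2 * j))) *
          (∏ j ∈ Finset.range (N + 1), (1 + PowerSeries.X ^ (2 * n + 1 + 2 * j)))) =
      AndrewsAux.φ N (∑ k ∈ Finset.range (N + 1), PowerSeries.X ^ (k ^ 2)) := by
    simp only [map_sum, map_mul, map_prod, map_pow, map_sub, map_add, map_one]
    exact AndrewsAux.main_quot
  rw [← sub_eq_zero, ← map_sub]
  refine PowerSeries.X_pow_dvd_iff.mp ?_ N (lt_add_one N)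
  refine Ideal.mem_span_singleton.mp ?_
  exact Ideal.Quotient.eq.mp key
end

section
/- For every positive integer m, as formal power series in q and a: ∑_{n≥0} q^{2mn} (q^{2mn+2m};q^{2m})_∞ (aq^{2mn+1};q^2)_∞ = 1 + ∑_{k≥1} (-a)^k q^{k^2} ∏_{j=1}^k (1 + q^{2j} + q^{4j} + ... + q^{2(m-1)j}). -/
open Finset

namespace AndrewsAux

variable {S : Type*} [CommRing S]

lemma xpow_zero {N : ℕ} {x : S} (hx : x ^ (N + 1) = 0) {e : ℕ} (he : N + 1 ≤ e) :
    x ^ e = 0 := by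
  obtain ⟨d, rfl⟩ := Nat.exists_eq_add_of_le he
  rw [pow_add, hx, zero_mul]

def Fk (N : ℕ) (x : S) (k : ℕ) : S := ∏ j ∈ Icc (k + 1) N, (1 - x ^ (2 * j))

def Bt (N : ℕ) (x α : S) (t : ℕ) : S :=
  ∑ k ∈ range (N + 1), (-α) ^ k * x ^ (k * (k - 1) + t * k) * Fk N x k

def At (N : ℕ) (x α : S) (t : ℕ) : S := ∏ j ∈ range (N + 1), (1 - α * x ^ (t + 2 * j))

lemma Icc_insert {k N : ℕ} (hk : k + 1 ≤ N) :
    Finset.Icc (k + 1) N = insert (k + 1) (Finset.Icc (k + 2) N) := by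
  ext a; simp only [mem_Icc, mem_insert]; omega

lemma Fk_rel (N : ℕ) (x : S) {k : ℕ} (hk : k + 1 ≤ N) :
    (1 - x ^ (2 * (k + 1))) * Fk N x (k + 1) = Fk N x k := by
  unfold Fk
  rw [Icc_insert hk, prod_insert (by simp)]

lemma At_boundary {N : ℕ} {x : S} (α : S) (hx : x ^ (N + 1) = 0) {t : ℕ}
    (ht : N + 1 ≤ t) : At N x α t = 1 := by
  unfold At
  refine prod_eq_one fun j _ => ?_
  rw [xpow_zero hx (by omega), mul_zero, sub_zero]

lemma Bt_boundary {N : ℕ} {x : S} (α : S) (hx : x ^ (N + 1) = 0) {t : ℕ}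
    (ht : N + 1 ≤ t) : Bt N x α t = Fk N x 0 := by
  unfold Bt
  rw [Finset.sum_eq_single 0]
  · simp
  · intro k hk hk0
    have h1 : N + 1 ≤ t * k := le_trans ht (Nat.le_mul_of_pos_right t (Nat.pos_of_ne_zero hk0))
    rw [xpow_zero hx (by omega), mul_zero, zero_mul]
  · intro h; simp at h

lemma nat_exp1 (t k : ℕ) :
    t + (k * (k - 1) + (t + 2) * k) = (k + 1) * k + t * (k + 1) := by
  cases k with
  | zero => simp
  | succ n => simp only [Nat.add_sub_cancel]; ring

lemma At_step {N : ℕ} {x : S} (α : S) (hx : x ^ (N + 1) = 0) (t : ℕ) :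
    At N x α t = (1 - α * x ^ t) * At N x α (t + 2) := by
  unfold At
  rw [prod_range_succ', prod_range_succ]
  have h1 : (1 : S) - α * x ^ (t + 2 + 2 * N) = 1 := by
    rw [xpow_zero hx (by omega), mul_zero, sub_zero]
  rw [h1, mul_one, Nat.mul_zero, Nat.add_zero, mul_comm]
  congr 1
  refine prod_congr rfl fun j _ => ?_
  have h2 : t + 2 * (j + 1) = t + 2 + 2 * j := by ring
  rw [h2]

lemma Bt_step {N : ℕ} (x α : S) (hx : x ^ (N + 1) = 0) {t : ℕ} (ht : 1 ≤ t) :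
    Bt N x α t = (1 - α * x ^ t) * Bt N x α (t + 2) := by
  have key : Bt N x α (t + 2) - Bt N x α t = α * x ^ t * Bt N x α (t + 2) := by
    unfold Bt
    rw [← sum_sub_distrib, mul_sum, sum_range_succ', sum_range_succ]
    have h0 : (-α) ^ 0 * x ^ (0 * (0 - 1) + (t + 2) * 0) * Fk N x 0 -
        (-α) ^ 0 * x ^ (0 * (0 - 1) + t * 0) * Fk N x 0 = 0 := by simp
    have hN : α * x ^ t * ((-α) ^ N * x ^ (N * (N - 1) + (t + 2) * N) * Fk N x N) = 0 := by
      have h1 : N ≤ (t + 2) * N := Nat.le_mul_of_pos_left N (by omega)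
      have hz : x ^ (N * (N - 1) + (t + 2) * N) * x ^ t = 0 := by
        rw [← pow_add]; exact xpow_zero hx (by omega)
      have hr : α * x ^ t * ((-α) ^ N * x ^ (N * (N - 1) + (t + 2) * N) * Fk N x N) =
          x ^ (N * (N - 1) + (t + 2) * N) * x ^ t * (α * (-α) ^ N * Fk N x N) := by ring
      rw [hr, hz, zero_mul]
    rw [h0, hN, add_zero, add_zero]
    refine sum_congr rfl fun k hk => ?_
    simp only [Nat.add_sub_cancel]
    have hk' : k + 1 ≤ N := by simpa using hk
    have hF := Fk_rel N x hk'
    have e1 : (k + 1) * k + (t + 2) * (k + 1) = ((k + 1) * k + t * (k + 1)) + 2 * (k + 1) := by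
      ring
    have e2 : t + (k * (k - 1) + (t + 2) * k) = (k + 1) * k + t * (k + 1) := nat_exp1 t k
    have e3 : α * x ^ t * ((-α) ^ k * x ^ (k * (k - 1) + (t + 2) * k) * Fk N x k) =
        α * (-α) ^ k * x ^ ((k + 1) * k + t * (k + 1)) * Fk N x k := by
      rw [← e2, pow_add]; ring
    rw [e3, e1, pow_add, ← hF]
    ring
  linear_combination -key

lemma DA_eq_B {N : ℕ} (x α : S) (hx : x ^ (N + 1) = 0) :
    ∀ c t : ℕ, 1 ≤ t → N + 1 ≤ t + 2 * c → Fk N x 0 * At N x α t = Bt N x α t := by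
  intro c
  induction c with
  | zero =>
    intro t ht hb
    rw [At_boundary α hx (by omega), Bt_boundary α hx (by omega), mul_one]
  | succ c ih =>
    intro t ht hb
    by_cases hbig : N + 1 ≤ t
    · rw [At_boundary α hx hbig, Bt_boundary α hx hbig, mul_one]
    · rw [At_step α hx t, Bt_step x α hx ht, ← mul_assoc, mul_comm (Fk N x 0),
        mul_assoc, ih (t + 2) (by omega) (by omega)]

def Hn (N m : ℕ) (x : S) (n : ℕ) : S := ∏ j ∈ Icc (n + 1) N, (1 - x ^ (2 * m * j))

def Gt (N m : ℕ) (x : S) (t : ℕ) : S := ∑ n ∈ range (N + 1), x ^ (2 * m * t * n) * Hn N m x n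

lemma Hn_rel (N m : ℕ) (x : S) {n : ℕ} (hn : n + 1 ≤ N) :
    (1 - x ^ (2 * m * (n + 1))) * Hn N m x (n + 1) = Hn N m x n := by
  unfold Hn
  rw [Icc_insert hn, prod_insert (by simp)]

lemma Hn_top (N m : ℕ) (x : S) : Hn N m x N = 1 := by
  unfold Hn
  rw [Finset.Icc_eq_empty (by omega), prod_empty]

lemma Gt_base {N m : ℕ} {x : S} (hm : 0 < m) (hx : x ^ (N + 1) = 0) :
    Gt N m x 1 = 1 := by
  unfold Gt
  rw [sum_range_succ']
  have h1 : ∀ n ∈ range N, x ^ (2 * m * 1 * (n + 1)) * Hn N m x (n + 1) =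
      Hn N m x (n + 1) - Hn N m x n := by
    intro n hn
    have hn' : n + 1 ≤ N := by simpa using hn
    have := Hn_rel N m x hn'
    have h2 : 2 * m * 1 * (n + 1) = 2 * m * (n + 1) := by ring
    rw [h2]
    linear_combination -this
  rw [sum_congr rfl h1, Finset.sum_range_sub (fun n => Hn N m x n), Hn_top]
  simp

lemma Gt_step {N m : ℕ} {x : S} (hm : 0 < m) (hx : x ^ (N + 1) = 0) {t : ℕ} (ht : 1 ≤ t) :
    Gt N m x (t + 1) = (1 - x ^ (2 * m * t)) * Gt N m x t := by
  have key : Gt N m x t - Gt N m x (t + 1) = x ^ (2 * m * t) * Gt N m x t := by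
    unfold Gt
    rw [← sum_sub_distrib, mul_sum, sum_range_succ', sum_range_succ]
    have h0 : x ^ (2 * m * t * 0) * Hn N m x 0 - x ^ (2 * m * (t + 1) * 0) * Hn N m x 0 = 0 := by
      simp
    have hN : x ^ (2 * m * t) * (x ^ (2 * m * t * N) * Hn N m x N) = 0 := by
      rw [← mul_assoc, ← pow_add, show 2 * m * t + 2 * m * t * N = 2 * m * t * (N + 1) from by
        ring]
      have h1 : N + 1 ≤ 2 * m * t * (N + 1) := Nat.le_mul_of_pos_left (N + 1) (by positivity)
      rw [xpow_zero hx h1, zero_mul]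
    rw [h0, hN, add_zero, add_zero]
    refine sum_congr rfl fun n hn => ?_
    have hn' : n + 1 ≤ N := by simpa using hn
    have hH := Hn_rel N m x hn'
    have e1 : 2 * m * (t + 1) * (n + 1) = 2 * m * t * (n + 1) + 2 * m * (n + 1) := by ring
    have e2 : 2 * m * t * (n + 1) = 2 * m * t + 2 * m * t * n := by ring
    rw [e1, pow_add, e2, pow_add, ← hH]
    ring
  linear_combination -key

lemma Gt_eq {N m : ℕ} {x : S} (hm : 0 < m) (hx : x ^ (N + 1) = 0) (k : ℕ) :
    Gt N m x (k + 1) = ∏ j ∈ Icc 1 k, (1 - x ^ (2 * m * j)) := by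
  induction k with
  | zero => rw [Gt_base hm hx]; simp
  | succ k ih =>
    rw [Gt_step hm hx (by omega), ih, Finset.prod_Icc_succ_top (by omega), mul_comm]

lemma prod_eq_Hn {N m : ℕ} {x : S} (hm : 0 < m) (hx : x ^ (N + 1) = 0) {n : ℕ} (hn : n ≤ N) :
    ∏ j ∈ range (N + 1), (1 - x ^ (2 * m * n + 2 * m + 2 * m * j)) = Hn N m x n := by
  have h1 : ∏ j ∈ range (N + 1), (1 - x ^ (2 * m * n + 2 * m + 2 * m * j)) =
      ∏ j ∈ Icc (n + 1) (n + 1 + N), (1 - x ^ (2 * m * j)) := by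
    have e0 : Finset.Icc (n + 1) (n + 1 + N) = Finset.Ico (n + 1) (n + 1 + N + 1) := by
      ext a; simp only [mem_Icc, mem_Ico]; omega
    rw [e0, Finset.prod_Ico_eq_prod_range, show n + 1 + N + 1 - (n + 1) = N + 1 from by omega]
    refine prod_congr rfl fun j _ => ?_
    rw [show 2 * m * (n + 1 + j) = 2 * m * n + 2 * m + 2 * m * j from by ring]
  rw [h1]
  unfold Hn
  have e1 : Finset.Icc (n + 1) (n + 1 + N) = Finset.Ioc n (n + 1 + N) := by
    ext a; simp only [mem_Icc, mem_Ioc]; omega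
  have e2 : Finset.Icc (n + 1) N = Finset.Ioc n N := by
    ext a; simp only [mem_Icc, mem_Ioc]; omega
  rw [e1, e2, ← Finset.prod_Ioc_consecutive _ hn (by omega : N ≤ n + 1 + N)]
  have h3 : ∏ j ∈ Ioc N (n + 1 + N), (1 - x ^ (2 * m * j)) = 1 := by
    refine prod_eq_one fun j hj => ?_
    have hj1 : N + 1 ≤ j := (mem_Ioc.mp hj).1
    have hj2 : j ≤ 2 * m * j := Nat.le_mul_of_pos_left j (by positivity)
    rw [xpow_zero hx (by omega), sub_zero]
  rw [h3, mul_one]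

lemma geom_lemma (m : ℕ) (y : S) : (1 - y) * ∑ i ∈ range m, y ^ i = 1 - y ^ m := by
  linear_combination -geom_sum_mul y m

lemma Fk_mul {N : ℕ} (x : S) {k : ℕ} (hk : k ≤ N) :
    (∏ j ∈ Icc 1 k, (1 - x ^ (2 * j))) * Fk N x k = Fk N x 0 := by
  unfold Fk
  have e1 : Finset.Icc 1 k = Finset.Ioc 0 k := by ext a; simp only [mem_Icc, mem_Ioc]; omega
  have e2 : Finset.Icc (k + 1) N = Finset.Ioc k N := by
    ext a; simp only [mem_Icc, mem_Ioc]; omega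
  have e3 : Finset.Icc (0 + 1) N = Finset.Ioc 0 N := by
    ext a; simp only [mem_Icc, mem_Ioc]; omega
  rw [e1, e2, e3]
  exact Finset.prod_Ioc_consecutive _ (Nat.zero_le k) hk

lemma isUnit_D {N : ℕ} {x : S} (hx : x ^ (N + 1) = 0) : IsUnit (Fk N x 0) := by
  unfold Fk
  refine Finset.prod_induction _ IsUnit (fun a b ha hb => ha.mul hb) isUnit_one fun j hj => ?_
  have hj1 : 1 ≤ j := (mem_Icc.mp hj).1
  have hnil : IsNilpotent (x ^ (2 * j)) := by
    refine ⟨N + 1, ?_⟩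
    rw [← pow_mul]
    have : N + 1 ≤ 2 * j * (N + 1) := Nat.le_mul_of_pos_left (N + 1) (by positivity)
    exact xpow_zero hx this
  exact hnil.isUnit_one_sub

theorem main_abstract (N m : ℕ) (hm : 0 < m) (x α : S) (hx : x ^ (N + 1) = 0) :
    (∑ n ∈ range (N + 1), x ^ (2 * m * n) *
        (∏ j ∈ range (N + 1), (1 - x ^ (2 * m * n + 2 * m + 2 * m * j))) *
        (∏ j ∈ range (N + 1), (1 - α * x ^ (2 * m * n + 1 + 2 * j)))) =
    1 + ∑ k ∈ Icc 1 N, (-α) ^ k * x ^ (k ^ 2) *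
        ∏ j ∈ Icc 1 k, ∑ i ∈ range m, x ^ (2 * i * j) := by
  have hD : IsUnit (Fk N x 0) := isUnit_D hx
  apply hD.mul_left_cancel
  have hL1 : ∀ n ∈ range (N + 1), x ^ (2 * m * n) *
      (∏ j ∈ range (N + 1), (1 - x ^ (2 * m * n + 2 * m + 2 * m * j))) *
      (∏ j ∈ range (N + 1), (1 - α * x ^ (2 * m * n + 1 + 2 * j))) =
      x ^ (2 * m * n) * Hn N m x n * At N x α (2 * m * n + 1) := by
    intro n hn
    rw [prod_eq_Hn hm hx (by simpa [Nat.lt_succ_iff] using hn)]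
    rfl
  rw [sum_congr rfl hL1, Finset.mul_sum]
  have hL2 : ∀ n ∈ range (N + 1), Fk N x 0 *
      (x ^ (2 * m * n) * Hn N m x n * At N x α (2 * m * n + 1)) =
      x ^ (2 * m * n) * Hn N m x n * Bt N x α (2 * m * n + 1) := by
    intro n hn
    rw [← DA_eq_B x α hx (N + 1) (2 * m * n + 1) (by omega) (by omega)]
    ring
  rw [sum_congr rfl hL2]
  simp only [Bt]
  have hL3 : ∀ n ∈ range (N + 1), x ^ (2 * m * n) * Hn N m x n *
      (∑ k ∈ range (N + 1), (-α) ^ k * x ^ (k * (k - 1) + (2 * m * n + 1) * k) * Fk N x k) =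
      ∑ k ∈ range (N + 1), (-α) ^ k * x ^ (k ^ 2) * Fk N x k *
        (x ^ (2 * m * (k + 1) * n) * Hn N m x n) := by
    intro n hn
    rw [Finset.mul_sum]
    refine sum_congr rfl fun k hk => ?_
    have e : 2 * m * n + (k * (k - 1) + (2 * m * n + 1) * k) = k ^ 2 + 2 * m * (k + 1) * n := by
      cases k with
      | zero => simp
      | succ p => simp only [Nat.add_sub_cancel]; ring
    calc x ^ (2 * m * n) * Hn N m x n *
          ((-α) ^ k * x ^ (k * (k - 1) + (2 * m * n + 1) * k) * Fk N x k) =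
        (-α) ^ k * (x ^ (2 * m * n) * x ^ (k * (k - 1) + (2 * m * n + 1) * k)) * Fk N x k *
          Hn N m x n := by ring
      _ = (-α) ^ k * x ^ (k ^ 2 + 2 * m * (k + 1) * n) * Fk N x k * Hn N m x n := by
          rw [← pow_add, e]
      _ = (-α) ^ k * x ^ (k ^ 2) * Fk N x k * (x ^ (2 * m * (k + 1) * n) * Hn N m x n) := by
          rw [pow_add]; ring
  rw [sum_congr rfl hL3, Finset.sum_comm]
  have hL4 : ∀ k ∈ range (N + 1), (∑ n ∈ range (N + 1), (-α) ^ k * x ^ (k ^ 2) * Fk N x k *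
      (x ^ (2 * m * (k + 1) * n) * Hn N m x n)) =
      Fk N x 0 * ((-α) ^ k * x ^ (k ^ 2) * ∏ j ∈ Icc 1 k, ∑ i ∈ range m, x ^ (2 * i * j)) := by
    intro k hk
    have hk' : k ≤ N := by simpa [Nat.lt_succ_iff] using hk
    rw [← Finset.mul_sum, show (∑ n ∈ range (N + 1), x ^ (2 * m * (k + 1) * n) * Hn N m x n) =
      Gt N m x (k + 1) from rfl, Gt_eq hm hx k]
    have h6 : ∏ j ∈ Icc 1 k, (1 - x ^ (2 * m * j)) =
        ∏ j ∈ Icc 1 k, ((1 - x ^ (2 * j)) * ∑ i ∈ range m, x ^ (2 * i * j)) := by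
      refine prod_congr rfl fun j hj => ?_
      calc (1 : S) - x ^ (2 * m * j) = 1 - (x ^ (2 * j)) ^ m := by
            rw [← pow_mul, show 2 * j * m = 2 * m * j from by ring]
        _ = (1 - x ^ (2 * j)) * ∑ i ∈ range m, (x ^ (2 * j)) ^ i := (geom_lemma m _).symm
        _ = (1 - x ^ (2 * j)) * ∑ i ∈ range m, x ^ (2 * i * j) := by
            congr 1
            refine sum_congr rfl fun i _ => ?_
            rw [← pow_mul, show 2 * j * i = 2 * i * j from by ring]
    rw [h6, Finset.prod_mul_distrib, ← Fk_mul x hk']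
    ring
  rw [sum_congr rfl hL4, ← Finset.mul_sum]
  congr 1
  have hsplit : Finset.range (N + 1) = insert 0 (Finset.Icc 1 N) := by
    ext a; simp only [mem_range, mem_insert, mem_Icc]; omega
  rw [hsplit, Finset.sum_insert (by simp)]
  norm_num

lemma coeff_eq_of_quot {R : Type*} [CommRing R] {N : ℕ} {F G : PowerSeries R}
    (h : Ideal.Quotient.mk (Ideal.span {(PowerSeries.X : PowerSeries R) ^ (N + 1)}) F =
         Ideal.Quotient.mk (Ideal.span {(PowerSeries.X : PowerSeries R) ^ (N + 1)}) G) :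
    PowerSeries.coeff (R := R) N F = PowerSeries.coeff (R := R) N G := by
  rw [Ideal.Quotient.eq, Ideal.mem_span_singleton] at h
  have h2 := PowerSeries.X_pow_dvd_iff.mp h N (Nat.lt_succ_self N)
  rwa [map_sub, sub_eq_zero] at h2

end AndrewsAux



/-- The weighted generalization of Andrews' identity:
`∑_{n≥0} q^{2mn}(q^{2mn+2m};q^{2m})_∞(aq^{2mn+1};q²)_∞
  = 1 + ∑_{k≥1} (-a)^k q^{k²} ∏_{j=1}^k (1+q^{2j}+⋯+q^{2(m-1)j})`
as formal power series in `q` over `ℤ[a]`.  Summands with index `> N` and factors of the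
infinite products with index `j > N` have no effect on the `N`-th coefficient, so that
coefficient is computed from the displayed finite truncations. -/
theorem andrews_general_weighted (m : ℕ) (hm : 0 < m) (N : ℕ) :
    PowerSeries.coeff (R := Polynomial ℤ) N
      (∑ n ∈ Finset.range (N + 1),
        PowerSeries.X ^ (2 * m * n) *
          (∏ j ∈ Finset.range (N + 1),
            (1 - PowerSeries.X ^ (2 * m * n + 2 * m + 2 * m * j))) *
          (∏ j ∈ Finset.range (N + 1),
            (1 - PowerSeries.C (R := Polynomial ℤ) Polynomial.X *
              PowerSeries.X ^ (2 * m * n + 1 + 2 * j)))) =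
    PowerSeries.coeff (R := Polynomial ℤ) N
      (1 + ∑ k ∈ Finset.Icc 1 N,
        (-(PowerSeries.C (R := Polynomial ℤ) Polynomial.X)) ^ k * PowerSeries.X ^ (k ^ 2) *
          ∏ j ∈ Finset.Icc 1 k, ∑ i ∈ Finset.range m, PowerSeries.X ^ (2 * i * j)) := by
  apply AndrewsAux.coeff_eq_of_quot
  simp only [map_sum, map_mul, map_prod, map_pow, map_sub, map_one, map_add, map_neg]
  have hx : (Ideal.Quotient.mk (Ideal.span {(PowerSeries.X : PowerSeries (Polynomial ℤ)) ^ (N + 1)})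
      PowerSeries.X) ^ (N + 1) = 0 := by
    rw [← map_pow, Ideal.Quotient.eq_zero_iff_mem]
    exact Ideal.subset_span (Set.mem_singleton _)
  exact AndrewsAux.main_abstract N m hm _ _ hx
end

section
/- For positive integers k and m, there is a bijection between the set B_{k,m} of partitions into k distinct odd parts π_1 > π_2 > ... > π_k with π_i - π_{i+1} ≤ 2m for all i (with π_{k+1} := 0), and the set H_{k,m} of partitions in which every part is at most k and every part occurs with even multiplicity strictly less than 2m; under this bijection a partition λ ∈ B_{k,m} of total size N corresponds to a partition in H_{k,m} of total size N - k^2. -/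
namespace BHaux

/-- Extend a `Fin k`-indexed family by zero. -/
def pad (k : ℕ) (a : Fin k → ℕ) (j : ℕ) : ℕ := if h : j < k then a ⟨j, h⟩ else 0

lemma pad_fin (k : ℕ) (a : Fin k → ℕ) (i : Fin k) : pad k a i.1 = a i := by
  unfold pad; rw [dif_pos i.2]

/-- Suffix sums. -/
def S (k : ℕ) (a : Fin k → ℕ) (i : ℕ) : ℕ := ∑ j ∈ Finset.Ico i k, (pad k a j + 1)

lemma S_succ (k : ℕ) (a : Fin k → ℕ) {i : ℕ} (hi : i < k) :
    S k a i = pad k a i + 1 + S k a (i + 1) :=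
  Finset.sum_eq_sum_Ico_succ_bot hi _

lemma S_zero (k : ℕ) (a : Fin k → ℕ) {i : ℕ} (hi : k ≤ i) : S k a i = 0 := by
  unfold S; rw [Finset.Ico_eq_empty (by omega), Finset.sum_empty]

lemma S_ge (k : ℕ) (a : Fin k → ℕ) {i : ℕ} (hi : i < k) : 1 ≤ S k a i := by
  have := S_succ k a hi; omega

def fromA (k : ℕ) (a : Fin k → ℕ) : List ℕ := List.ofFn (fun i : Fin k => 2 * S k a i.1 - 1)

lemma fromA_length (k : ℕ) (a : Fin k → ℕ) : (fromA k a).length = k := by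
  simp [fromA]

lemma fromA_getD (k : ℕ) (a : Fin k → ℕ) (i : ℕ) :
    (fromA k a).getD i 0 = 2 * S k a i - 1 := by
  rcases lt_or_ge i k with h | h
  · rw [List.getD_eq_getElem _ _ (by simpa [fromA] using h)]
    simp [fromA]
  · rw [List.getD_eq_default _ _ (by simpa [fromA] using h), S_zero k a h]

def toA (k : ℕ) (l : List ℕ) (i : Fin k) : ℕ := (l.getD i.1 0 - l.getD (i.1 + 1) 0 - 1) / 2

section
variable (k m : ℕ)

def BP (l : List ℕ) : Prop :=
  l.length = k ∧ (∀ x ∈ l, Odd x) ∧ l.Chain' (· > ·) ∧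
    ∀ i < k, l.getD i 0 - l.getD (i + 1) 0 ≤ 2 * m

lemma BP_getD_odd {l : List ℕ} (hl : BP k m l) {i : ℕ} (hi : i < k) :
    l.getD i 0 % 2 = 1 := by
  have hlen : i < l.length := by rw [hl.1]; exact hi
  rw [List.getD_eq_getElem _ _ hlen]
  exact Nat.odd_iff.mp (hl.2.1 _ (List.getElem_mem hlen))

lemma BP_gt {l : List ℕ} (hl : BP k m l) {i : ℕ} (hi : i + 1 < k) :
    l.getD (i + 1) 0 < l.getD i 0 := by
  have h1 : i < l.length - 1 := by rw [hl.1]; omega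
  have := (List.isChain_iff_getElem.mp hl.2.2.1) i (by omega)
  have e1 : i < l.length := by omega
  have e2 : i + 1 < l.length := by omega
  rw [List.getD_eq_getElem _ _ e1, List.getD_eq_getElem _ _ e2]
  simpa [List.get_eq_getElem] using this

lemma fromA_mem_BP (a : Fin k → ℕ) (ha : ∀ i, a i < m) : BP k m (fromA k a) := by
  refine ⟨fromA_length k a, ?_, ?_, ?_⟩
  · intro x hx
    rw [fromA, List.mem_ofFn] at hx
    obtain ⟨i, rfl⟩ := hx
    have h1 := S_ge k a i.2
    show Odd (2 * S k a i.1 - 1)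
    rw [Nat.odd_iff]; omega
  · refine List.isChain_iff_getElem.mpr ?_
    intro i hi
    rw [fromA_length] at hi
    have h1 : i < k := by omega
    have h2 : i + 1 ≤ k := by omega
    have hS := S_succ k a h1
    have e1 : i < (fromA k a).length := by rw [fromA_length]; omega
    have e2 : i + 1 < (fromA k a).length := by rw [fromA_length]; omega
    show (fromA k a)[i] > (fromA k a)[i + 1]
    rw [← List.getD_eq_getElem _ 0 e1, ← List.getD_eq_getElem _ 0 e2,
      fromA_getD, fromA_getD]
    have h3 := S_ge k a h1
    omega
  · intro i hi
    rw [fromA_getD, fromA_getD]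
    have hS := S_succ k a hi
    have hp : pad k a i < m := by unfold pad; rw [dif_pos hi]; exact ha _
    omega

lemma toA_fromA (a : Fin k → ℕ) : toA k (fromA k a) = a := by
  funext i
  unfold toA
  rw [fromA_getD, fromA_getD]
  have hS := S_succ k a i.2
  rw [pad_fin] at hS
  rcases lt_or_ge (i.1 + 1) k with h | h
  · have := S_ge k a h; omega
  · have := S_zero k a h; omega

lemma fromA_toA {l : List ℕ} (hl : BP k m l) : fromA k (toA k l) = l := by
  have key : ∀ j i, i + j = k → 2 * S k (toA k l) i - 1 = l.getD i 0 := by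
    intro j
    induction j with
    | zero =>
      intro i hi
      rw [S_zero k _ (by omega), List.getD_eq_default _ _ (by rw [hl.1]; omega)]
    | succ j ih =>
      intro i hi
      have hik : i < k := by omega
      have h2 := ih (i + 1) (by omega)
      have hS := S_succ k (toA k l) hik
      have hpad : pad k (toA k l) i = (l.getD i 0 - l.getD (i + 1) 0 - 1) / 2 := by
        unfold pad toA; rw [dif_pos hik]
      have hodd := BP_getD_odd k m hl hik
      rcases lt_or_ge (i + 1) k with h | h
      · have hodd2 := BP_getD_odd k m hl h
        have hgt := BP_gt k m hl h
        have hge := S_ge k (toA k l) h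
        omega
      · have hz := S_zero k (toA k l) h
        have hz2 : l.getD (i + 1) 0 = 0 :=
          List.getD_eq_default _ _ (by rw [hl.1]; omega)
        omega
  apply List.ext_getElem (by rw [fromA_length, hl.1])
  intro i h1 h2
  rw [fromA_length] at h1
  rw [← List.getD_eq_getElem _ 0, ← List.getD_eq_getElem _ 0, fromA_getD]
  exact key (k - i) i (by omega)

def E1 (hm : 0 < m) : {a : Fin k → ℕ // ∀ i, a i < m} ≃ {l : List ℕ // BP k m l} where
  toFun a := ⟨fromA k a.1, fromA_mem_BP k m a.1 a.2⟩
  invFun l := ⟨toA k l.1, by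
    intro i
    show (l.1.getD i.1 0 - l.1.getD (i.1 + 1) 0 - 1) / 2 < m
    have := l.2.2.2.2 i.1 i.2
    omega⟩
  left_inv a := Subtype.ext (toA_fromA k a.1)
  right_inv l := Subtype.ext (fromA_toA k m l.2)

/-! ### The H side -/

def toMu (a : Fin k → ℕ) : Multiset ℕ := ∑ i : Fin k, Multiset.replicate (2 * a i) (i.1 + 1)

lemma count_toMu (a : Fin k → ℕ) (i : Fin k) : (toMu k a).count (i.1 + 1) = 2 * a i := by
  rw [toMu, Multiset.count_sum']
  rw [Finset.sum_eq_single i]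
  · rw [Multiset.count_replicate, if_pos rfl]
  · intro j _ hj
    rw [Multiset.count_replicate, if_neg]
    intro h
    exact hj (Fin.ext (by omega))
  · intro h; exact absurd (Finset.mem_univ i) h

lemma count_toMu_zero (a : Fin k → ℕ) (x : ℕ) (hx : ∀ i : Fin k, x ≠ i.1 + 1) :
    (toMu k a).count x = 0 := by
  rw [toMu, Multiset.count_sum']
  apply Finset.sum_eq_zero
  intro j _
  rw [Multiset.count_replicate, if_neg (fun h => hx j h.symm)]

def HP (μ : Multiset ℕ) : Prop :=
  (∀ x ∈ μ, 0 < x ∧ x ≤ k) ∧ ∀ x : ℕ, Even (μ.count x) ∧ μ.count x < 2 * m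

lemma toMu_mem_HP (hm : 0 < m) (a : Fin k → ℕ) (ha : ∀ i, a i < m) : HP k m (toMu k a) := by
  constructor
  · intro x hx
    rw [toMu, Multiset.mem_sum] at hx
    obtain ⟨i, -, hxi⟩ := hx
    have := Multiset.eq_of_mem_replicate hxi
    have hik := i.2
    omega
  · intro x
    by_cases hx : ∃ i : Fin k, x = i.1 + 1
    · obtain ⟨i, rfl⟩ := hx
      rw [count_toMu]
      exact ⟨⟨a i, by ring⟩, by have := ha i; omega⟩
    · push_neg at hx
      rw [count_toMu_zero k a x hx]
      exact ⟨Even.zero, by omega⟩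

def E2 (hm : 0 < m) : {a : Fin k → ℕ // ∀ i, a i < m} ≃ {μ : Multiset ℕ // HP k m μ} where
  toFun a := ⟨toMu k a.1, toMu_mem_HP k m hm a.1 a.2⟩
  invFun μ := ⟨fun i => μ.1.count (i.1 + 1) / 2, by
    intro i
    show μ.1.count (i.1 + 1) / 2 < m
    obtain ⟨⟨r, hr⟩, hlt⟩ := μ.2.2 (i.1 + 1)
    omega⟩
  left_inv a := by
    apply Subtype.ext
    funext i
    show (toMu k a.1).count (i.1 + 1) / 2 = a.1 i
    rw [count_toMu]; omega
  right_inv μ := by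
    apply Subtype.ext
    show toMu k _ = μ.1
    rw [Multiset.ext]
    intro x
    by_cases hx : ∃ i : Fin k, x = i.1 + 1
    · obtain ⟨i, rfl⟩ := hx
      rw [count_toMu]
      show 2 * (μ.1.count (i.1 + 1) / 2) = μ.1.count (i.1 + 1)
      obtain ⟨r, hr⟩ := (μ.2.2 (i.1 + 1)).1
      omega
    · push_neg at hx
      rw [count_toMu_zero k _ x hx]
      symm
      rw [Multiset.count_eq_zero]
      intro hmem
      obtain ⟨h0, hk⟩ := μ.2.1 x hmem
      exact hx ⟨x - 1, by omega⟩ (by show x = x - 1 + 1; omega)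

/-! ### Sums -/

lemma sum_tri (f : ℕ → ℕ) (n : ℕ) :
    ∑ i ∈ Finset.range n, ∑ j ∈ Finset.Ico i n, f j = ∑ j ∈ Finset.range n, (j + 1) * f j := by
  induction n with
  | zero => simp
  | succ n ih =>
    rw [Finset.sum_range_succ, Finset.sum_range_succ]
    have h1 : ∀ i ∈ Finset.range n, ∑ j ∈ Finset.Ico i (n + 1), f j
        = (∑ j ∈ Finset.Ico i n, f j) + f n := fun i hi =>
      Finset.sum_Ico_succ_top (le_of_lt (Finset.mem_range.mp hi)) f
    rw [Finset.sum_congr rfl h1, Finset.sum_add_distrib, ih,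
      Finset.sum_Ico_succ_top (le_refl n) f]
    simp [Finset.sum_const, Finset.card_range, mul_comm]
    ring

lemma sum_stair (n : ℕ) : ∑ i ∈ Finset.range n, (2 * (n - i) - 1) = n ^ 2 := by
  induction n with
  | zero => simp
  | succ n ih =>
    rw [Finset.sum_range_succ']
    have h1 : ∀ i ∈ Finset.range n, (2 * (n + 1 - (i + 1)) - 1) = 2 * (n - i) - 1 := by
      intro i hi; congr 2; omega
    rw [Finset.sum_congr rfl h1, ih]
    have : n + 1 - 0 = n + 1 := rfl
    rw [this]; ring_nf; omega

def S' (a : Fin k → ℕ) (i : ℕ) : ℕ := ∑ j ∈ Finset.Ico i k, pad k a j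

lemma S_eq_S' (a : Fin k → ℕ) (i : ℕ) : S k a i = S' k a i + (k - i) := by
  unfold S S'
  rw [Finset.sum_add_distrib, Finset.sum_const, Nat.card_Ico, smul_eq_mul, mul_one]

lemma sum_fromA (a : Fin k → ℕ) :
    (fromA k a).sum = k ^ 2 + ∑ i : Fin k, 2 * a i * (i.1 + 1) := by
  rw [fromA, List.sum_ofFn]
  have h1 : ∀ i : Fin k, 2 * S k a i.1 - 1 = 2 * S' k a i.1 + (2 * (k - i.1) - 1) := by
    intro i
    have := S_eq_S' k a i.1
    have hik := i.2
    omega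
  calc ∑ i : Fin k, (2 * S k a i.1 - 1)
      = ∑ i : Fin k, (2 * S' k a i.1 + (2 * (k - i.1) - 1)) :=
        Finset.sum_congr rfl (fun i _ => h1 i)
    _ = (∑ i : Fin k, 2 * S' k a i.1) + ∑ i : Fin k, (2 * (k - i.1) - 1) :=
        Finset.sum_add_distrib
    _ = k ^ 2 + ∑ i : Fin k, 2 * a i * (i.1 + 1) := by
        rw [Fin.sum_univ_eq_sum_range (fun j => 2 * S' k a j) k,
          Fin.sum_univ_eq_sum_range (fun j => 2 * (k - j) - 1) k, sum_stair k,
          ← Finset.mul_sum]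
        unfold S'
        rw [sum_tri (pad k a) k, Finset.mul_sum]
        rw [add_comm]
        congr 1
        rw [← Fin.sum_univ_eq_sum_range (fun j => 2 * ((j + 1) * pad k a j)) k]
        apply Finset.sum_congr rfl
        intro i _
        rw [pad_fin]
        ring

lemma sum_toMu (a : Fin k → ℕ) : (toMu k a).sum = ∑ i : Fin k, 2 * a i * (i.1 + 1) := by
  rw [toMu, Multiset.sum_sum]
  apply Finset.sum_congr rfl
  intro i _
  rw [Multiset.sum_replicate, smul_eq_mul]

end

end BHaux

/-- There is a bijection between `B_{k,m}` (partitions into `k` distinct odd parts,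
listed in decreasing order, with consecutive gaps at most `2m`, including the gap from
the smallest part to `0`) and `H_{k,m}` (partitions with every part at most `k` and
every part occurring with even multiplicity `< 2m`), under which a partition of total
size `N` in `B_{k,m}` corresponds to a partition of total size `N - k²` in `H_{k,m}`. -/
theorem B_equiv_H (k m : ℕ) (hk : 0 < k) (hm : 0 < m) :
    ∃ e : {l : List ℕ // l.length = k ∧ (∀ x ∈ l, Odd x) ∧ l.Chain' (· > ·) ∧
            ∀ i < k, l.getD i 0 - l.getD (i + 1) 0 ≤ 2 * m} ≃
          {μ : Multiset ℕ // (∀ x ∈ μ, 0 < x ∧ x ≤ k) ∧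
            ∀ x : ℕ, Even (μ.count x) ∧ μ.count x < 2 * m},
      ∀ b, (b : {l : List ℕ // l.length = k ∧ (∀ x ∈ l, Odd x) ∧ l.Chain' (· > ·) ∧
            ∀ i < k, l.getD i 0 - l.getD (i + 1) 0 ≤ 2 * m}).1.sum
          = k ^ 2 + ((e b).1.sum) := by
  have hB : {l : List ℕ // l.length = k ∧ (∀ x ∈ l, Odd x) ∧ l.Chain' (· > ·) ∧
      ∀ i < k, l.getD i 0 - l.getD (i + 1) 0 ≤ 2 * m} = {l : List ℕ // BHaux.BP k m l} := rfl
  have hH : {μ : Multiset ℕ // (∀ x ∈ μ, 0 < x ∧ x ≤ k) ∧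
      ∀ x : ℕ, Even (μ.count x) ∧ μ.count x < 2 * m} = {μ : Multiset ℕ // BHaux.HP k m μ} := rfl
  refine ⟨((BHaux.E1 k m hm).symm.trans (BHaux.E2 k m hm)), ?_⟩
  intro b
  have hb : b = BHaux.E1 k m hm ((BHaux.E1 k m hm).symm b) :=
    ((BHaux.E1 k m hm).apply_symm_apply b).symm
  conv_lhs => rw [hb]
  show (BHaux.fromA k ((BHaux.E1 k m hm).symm b).1).sum = _
  rw [BHaux.sum_fromA]
  congr 1
  exact (BHaux.sum_toMu k ((BHaux.E1 k m hm).symm b).1).symm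
end

section
/- For positive integers k and m, the generating function for partitions into k distinct odd parts with consecutive differences at most 2m (including the gap from the smallest part to 0) equals q^{k^2} ∏_{j=1}^k (1 + q^{2j} + q^{4j} + ... + q^{2(m-1)j}), i.e., the number of such partitions of n equals the coefficient of q^{n-k^2} in ∏_{j=1}^k ∑_{i=0}^{m-1} q^{2ij}. -/
/-- The list of parts of a finset of naturals in decreasing order. -/
def descList (S : Finset ℕ) : List ℕ := (S.sort (· ≤ ·)).reverse

lemma descList_toFinset (S : Finset ℕ) : (descList S).toFinset = S := by
  simp [descList]

lemma descList_length (S : Finset ℕ) : (descList S).length = S.card := by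
  simp [descList]

lemma descList_sorted (S : Finset ℕ) : (descList S).Pairwise (· > ·) := by
  rw [descList, List.pairwise_reverse]
  exact S.sortedLT_sort.pairwise

lemma descList_eq (l : List ℕ) (hl : l.Pairwise (· > ·)) : descList l.toFinset = l := by
  have hnd : l.Nodup := hl.nodup
  have h1 : (l.toFinset.sort (· ≤ ·)) = l.reverse := by
    apply List.Perm.eq_of_pairwise' (r := (· ≤ ·)) (l₂ := l.reverse)
    · exact Finset.pairwise_sort _ _
    · rw [List.pairwise_reverse]
      exact hl.imp (fun hab => le_of_lt hab)
    · exact ((Finset.sort_perm_toList _ _).trans ((List.toFinset_toList hnd))).trans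
        l.reverse_perm.symm
  simp [descList, h1]

namespace Bkm

def g (k : ℕ) (P : ℕ → ℕ) (j : ℕ) : ℕ := 2 * (k - j) + 1 + 2 * ∑ l ∈ Finset.Icc j k, P l

lemma g_succ (k : ℕ) (P : ℕ → ℕ) (j : ℕ) (hj : j < k) :
    g k P j = g k P (j + 1) + (2 + 2 * P j) := by
  unfold g
  rw [show Finset.Icc j k = insert j (Finset.Icc (j+1) k) by
    ext x; simp only [Finset.mem_Icc, Finset.mem_insert]; omega]
  rw [Finset.sum_insert (by simp)]
  have : k - j = (k - (j+1)) + 1 := by omega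
  rw [this]; ring

lemma g_last (k : ℕ) (P : ℕ → ℕ) : g k P k = 1 + 2 * P k := by
  unfold g; simp

lemma g_odd (k : ℕ) (P : ℕ → ℕ) (j : ℕ) : Odd (g k P j) := by
  unfold g; exact ⟨k - j + ∑ l ∈ Finset.Icc j k, P l, by ring⟩

lemma g_lt (k : ℕ) (P : ℕ → ℕ) (a b : ℕ) (hab : a < b) (hbk : b ≤ k) :
    g k P b < g k P a := by
  induction b with
  | zero => omega
  | succ b ih =>
    have hb : g k P (b+1) < g k P b := by rw [g_succ k P b (by omega)]; omega
    rcases Nat.lt_or_ge a b with h | h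
    · exact hb.trans (ih h (by omega))
    · have : a = b := by omega
      exact this ▸ hb

lemma sum_map_range (f : ℕ → ℕ) (k : ℕ) :
    ((List.range k).map f).sum = ∑ i ∈ Finset.range k, f i := by
  induction k with
  | zero => simp
  | succ k ih =>
    rw [List.range_succ, Finset.sum_range_succ, List.map_append, List.sum_append, ih]; simp

lemma sum_odd (k : ℕ) : ∑ i ∈ Finset.range k, (2 * i + 1) = k ^ 2 := by
  induction k with
  | zero => simp
  | succ k ih => rw [Finset.sum_range_succ, ih]; ring

lemma sum_g (k : ℕ) (P : ℕ → ℕ) :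
    ∑ j ∈ Finset.Icc 1 k, g k P j = k ^ 2 + 2 * ∑ l ∈ Finset.Icc 1 k, l * P l := by
  unfold g
  rw [Finset.sum_add_distrib, ← Finset.mul_sum]
  have h1 : ∑ j ∈ Finset.Icc 1 k, (2 * (k - j) + 1) = k ^ 2 := by
    rw [← sum_odd k]
    apply Finset.sum_nbij' (fun j => k - j) (fun i => k - i) <;>
      (intro a ha; simp only [Finset.mem_Icc, Finset.mem_range] at *) <;> omega
  have h2 : ∑ j ∈ Finset.Icc 1 k, ∑ l ∈ Finset.Icc j k, P l
      = ∑ l ∈ Finset.Icc 1 k, l * P l := by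
    have hin : ∀ j ∈ Finset.Icc 1 k, ∑ l ∈ Finset.Icc j k, P l
        = ∑ l ∈ Finset.Icc 1 k, if j ≤ l then P l else 0 := by
      intro j hj
      simp only [Finset.mem_Icc] at hj
      rw [← Finset.sum_filter]
      apply Finset.sum_congr _ (fun _ _ => rfl)
      ext l
      simp only [Finset.mem_Icc, Finset.mem_filter]
      omega
    rw [Finset.sum_congr rfl hin, Finset.sum_comm]
    apply Finset.sum_congr rfl
    intro l hl
    simp only [Finset.mem_Icc] at hl
    rw [← Finset.sum_filter]
    have : (Finset.Icc 1 k).filter (fun j => j ≤ l) = Finset.Icc 1 l := by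
      ext j; simp only [Finset.mem_Icc, Finset.mem_filter]; omega
    rw [this, Finset.sum_const, Nat.card_Icc]
    simp [mul_comm]
  rw [h1, h2]

def L (k : ℕ) (P : ℕ → ℕ) : List ℕ := (List.range k).map (fun i => g k P (i + 1))

lemma L_length (k : ℕ) (P : ℕ → ℕ) : (L k P).length = k := by simp [L]

lemma L_sorted (k : ℕ) (P : ℕ → ℕ) : (L k P).Pairwise (· > ·) := by
  rw [List.pairwise_iff_getElem]
  intro i j hi hj hij
  simp only [L, List.length_map, List.length_range] at hi hj
  simp only [L, List.getElem_map, List.getElem_range]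
  exact g_lt k P (i+1) (j+1) (by omega) (by omega)

lemma L_getD (k : ℕ) (P : ℕ → ℕ) (i : ℕ) (hi : i < k) :
    (L k P).getD i 0 = g k P (i + 1) := by
  rw [List.getD_eq_getElem _ _ (by simp [L_length, hi])]
  simp [L]

lemma L_getD_out (k : ℕ) (P : ℕ → ℕ) (i : ℕ) (hi : k ≤ i) : (L k P).getD i 0 = 0 := by
  rw [List.getD_eq_default _ _ (by simp [L_length]; omega)]

def Sfun (k : ℕ) (P : ℕ → ℕ) : Finset ℕ := (L k P).toFinset

lemma descList_Sfun (k : ℕ) (P : ℕ → ℕ) : descList (Sfun k P) = L k P :=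
  descList_eq _ (L_sorted k P)

lemma Sfun_card (k : ℕ) (P : ℕ → ℕ) : (Sfun k P).card = k := by
  rw [Sfun, List.toFinset_card_of_nodup (L_sorted k P).nodup, L_length]

lemma Sfun_sum (k : ℕ) (P : ℕ → ℕ) : (Sfun k P).sum id = ∑ j ∈ Finset.Icc 1 k, g k P j := by
  rw [Sfun, List.sum_toFinset _ (L_sorted k P).nodup]
  simp only [L, List.map_map]
  rw [sum_map_range]
  apply Finset.sum_nbij' (fun i => i + 1) (fun j => j - 1) <;>
    (intro a ha; simp only [Function.comp_apply, id_eq, Finset.mem_Icc, Finset.mem_range] at *) <;> omega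

lemma Sfun_mem_odd (k : ℕ) (P : ℕ → ℕ) (x : ℕ) (hx : x ∈ Sfun k P) : Odd x := by
  simp only [Sfun, List.mem_toFinset, L, List.mem_map, List.mem_range] at hx
  obtain ⟨i, _, rfl⟩ := hx
  exact g_odd k P (i + 1)

def Pf (k : ℕ) (p : ∀ a ∈ Finset.Icc 1 k, ℕ) : ℕ → ℕ :=
  fun j => if h : j ∈ Finset.Icc 1 k then p j h else 0

lemma attach_sum (k : ℕ) (p : ∀ a ∈ Finset.Icc 1 k, ℕ) :
    ∑ x ∈ (Finset.Icc 1 k).attach, 2 * p x.1 x.2 * x.1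
      = 2 * ∑ l ∈ Finset.Icc 1 k, l * Pf k p l := by
  rw [Finset.mul_sum, ← Finset.sum_attach (Finset.Icc 1 k) (fun l => 2 * (l * Pf k p l))]
  apply Finset.sum_congr rfl
  intro x _
  rw [Pf, dif_pos x.2]
  ring

end Bkm

open scoped Classical in
/-- The number of partitions of `n` into `k` distinct odd parts with consecutive
differences at most `2m` (including the gap from the smallest part to `0`) equals the
coefficient of `q^{n-k²}` in `∏_{j=1}^k (1 + q^{2j} + q^{4j} + ⋯ + q^{2(m-1)j})`. -/
theorem B_km_generating_function (k m n : ℕ) (hk : 0 < k) (hm : 0 < m)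
    (hn : k ^ 2 ≤ n) :
    (((Finset.range (n + 1)).powerset.filter
      (fun S => S.sum id = n ∧ S.card = k ∧ (∀ x ∈ S, Odd x) ∧
        ∀ i < k, (descList S).getD i 0 - (descList S).getD (i + 1) 0 ≤ 2 * m)).card) =
    (∏ j ∈ Finset.Icc 1 k,
      ∑ i ∈ Finset.range m, (Polynomial.X : Polynomial ℕ) ^ (2 * i * j)).coeff
        (n - k ^ 2) := by
  classical
  set t := ((Finset.range (n + 1)).powerset.filter
      (fun S => S.sum id = n ∧ S.card = k ∧ (∀ x ∈ S, Odd x) ∧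
        ∀ i < k, (descList S).getD i 0 - (descList S).getD (i + 1) 0 ≤ 2 * m)) with ht
  set s := ((Finset.Icc 1 k).pi (fun _ => Finset.range m)).filter
      (fun p => n - k ^ 2 = ∑ x ∈ (Finset.Icc 1 k).attach, 2 * p x.1 x.2 * x.1) with hs
  have hR : (∏ j ∈ Finset.Icc 1 k,
      ∑ i ∈ Finset.range m, (Polynomial.X : Polynomial ℕ) ^ (2 * i * j)).coeff
        (n - k ^ 2) = s.card := by
    rw [Finset.prod_sum, Polynomial.finset_sum_coeff]
    rw [Finset.sum_congr rfl (fun p _ => by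
      rw [Finset.prod_pow_eq_pow_sum, Polynomial.coeff_X_pow])]
    rw [hs, Finset.card_filter]
  rw [hR]
  refine (Finset.card_bij (fun p _ => Bkm.Sfun k (Bkm.Pf k p)) ?_ ?_ ?_).symm
  · -- maps into t
    intro p hp
    rw [hs, Finset.mem_filter, Finset.mem_pi] at hp
    obtain ⟨hpi, hpe⟩ := hp
    set P := Bkm.Pf k p with hP
    have hPm : ∀ j ∈ Finset.Icc 1 k, P j < m := by
      intro j hj
      rw [hP, Bkm.Pf, dif_pos hj]
      simpa using hpi j hj
    have hsum2 : n = k ^ 2 + 2 * ∑ l ∈ Finset.Icc 1 k, l * P l := by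
      rw [Bkm.attach_sum, ← hP] at hpe
      omega
    have hSsum : (Bkm.Sfun k P).sum id = n := by
      rw [Bkm.Sfun_sum, Bkm.sum_g]; omega
    rw [ht, Finset.mem_filter, Finset.mem_powerset]
    refine ⟨?_, hSsum, Bkm.Sfun_card k P, Bkm.Sfun_mem_odd k P, ?_⟩
    · intro x hx
      have hxle : x ≤ (Bkm.Sfun k P).sum id :=
        Finset.single_le_sum (f := id) (fun _ _ => Nat.zero_le _) hx
      rw [Finset.mem_range]
      omega
    · intro i hik
      rw [Bkm.descList_Sfun]
      rcases Nat.lt_or_ge (i + 1) k with h2 | h2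
      · rw [Bkm.L_getD k P i (by omega), Bkm.L_getD k P (i+1) h2,
          Bkm.g_succ k P (i+1) h2]
        have := hPm (i+1) (by simp only [Finset.mem_Icc]; omega)
        omega
      · have hik' : i + 1 = k := by omega
        rw [Bkm.L_getD k P i hik, Bkm.L_getD_out k P (i+1) (by omega), hik',
          Bkm.g_last]
        have := hPm k (by simp only [Finset.mem_Icc]; omega)
        omega
  · -- injective
    intro p₁ h₁ p₂ h₂ heq
    have heq' : Bkm.Sfun k (Bkm.Pf k p₁) = Bkm.Sfun k (Bkm.Pf k p₂) := heq
    have hL : Bkm.L k (Bkm.Pf k p₁) = Bkm.L k (Bkm.Pf k p₂) := by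
      rw [← Bkm.descList_Sfun, ← Bkm.descList_Sfun, heq']
    have hg : ∀ j, 1 ≤ j → j ≤ k → Bkm.g k (Bkm.Pf k p₁) j = Bkm.g k (Bkm.Pf k p₂) j := by
      intro j hj1 hjk
      have := congrArg (fun l => l.getD (j - 1) 0) hL
      try simp only at this
      rw [Bkm.L_getD k _ (j-1) (by omega), Bkm.L_getD k _ (j-1) (by omega)] at this
      have hj1' : j - 1 + 1 = j := by omega
      rwa [hj1'] at this
    have hP : ∀ j, 1 ≤ j → j ≤ k → Bkm.Pf k p₁ j = Bkm.Pf k p₂ j := by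
      intro j hj1 hjk
      rcases Nat.lt_or_ge j k with hjlt | hjge
      · have e1 := Bkm.g_succ k (Bkm.Pf k p₁) j hjlt
        have e2 := Bkm.g_succ k (Bkm.Pf k p₂) j hjlt
        have e3 := hg j hj1 hjk
        have e4 := hg (j+1) (by omega) (by omega)
        omega
      · have hjk' : j = k := by omega
        rw [hjk']
        have e1 := Bkm.g_last k (Bkm.Pf k p₁)
        have e2 := Bkm.g_last k (Bkm.Pf k p₂)
        have e3 := hg k (by omega) le_rfl
        omega
    funext a ha
    have hmem := ha
    simp only [Finset.mem_Icc] at hmem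
    have := hP a hmem.1 hmem.2
    simp only [Bkm.Pf, dif_pos ha] at this
    exact this
  · -- surjective
    intro S hSt
    rw [ht, Finset.mem_filter, Finset.mem_powerset] at hSt
    obtain ⟨hsub, hsum, hcard, hodd, hgap⟩ := hSt
    set D := descList S with hD
    have hDs : D.Pairwise (· > ·) := descList_sorted S
    have hlen : D.length = k := by rw [hD, descList_length, hcard]
    have hDS : D.toFinset = S := descList_toFinset S
    have hoddD : ∀ i, i < k → Odd (D.getD i 0) := by
      intro i hi
      rw [List.getD_eq_getElem _ _ (by omega)]
      have hmem := List.mem_toFinset.mpr (List.getElem_mem (l := D) (by omega : i < D.length))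
      rw [hDS] at hmem
      exact hodd _ hmem
    have hstrict : ∀ i, i + 1 < k → D.getD (i+1) 0 < D.getD i 0 := by
      intro i hi
      rw [List.getD_eq_getElem _ _ (by omega), List.getD_eq_getElem _ _ (by omega)]
      exact (List.pairwise_iff_getElem.mp hDs) i (i+1) (by omega) (by omega) (by omega)
    have hDk : D.getD k 0 = 0 := List.getD_eq_default _ _ (by omega)
    set q : ℕ → ℕ := fun j => (D.getD (j-1) 0 - D.getD j 0 - 1) / 2 with hqdef
    set p : ∀ a ∈ Finset.Icc 1 k, ℕ := fun j _ => q j with hpdef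
    have hPfq : ∀ j, 1 ≤ j → j ≤ k → Bkm.Pf k p j = q j := by
      intro j hj1 hjk
      rw [Bkm.Pf, dif_pos (by simp only [Finset.mem_Icc]; omega)]
    have hq : ∀ j, 1 ≤ j → j ≤ k → q j < m := by
      intro j hj1 hjk
      have ho1 := hoddD (j-1) (by omega)
      rw [Nat.odd_iff] at ho1
      have hg1 := hgap (j-1) (by omega)
      have hj1' : j - 1 + 1 = j := by omega
      rw [hj1'] at hg1
      simp only [hqdef]
      rcases Nat.lt_or_ge j k with hjlt | hjge
      · have ho2 := hoddD j (by omega)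
        rw [Nat.odd_iff] at ho2
        have hst := hstrict (j-1) (by omega)
        rw [hj1'] at hst
        omega
      · have hjk' : j = k := by omega
        rw [hjk'] at ho1 hg1 ⊢
        rw [hDk] at hg1 ⊢
        omega
    have hgeq : ∀ d j, 1 ≤ j → j ≤ k → k - j = d →
        Bkm.g k (Bkm.Pf k p) j = D.getD (j-1) 0 := by
      intro d
      induction d with
      | zero =>
        intro j hj1 hjk hd
        have hjk' : j = k := by omega
        rw [hjk', Bkm.g_last, hPfq k (by omega) le_rfl]
        simp only [hqdef]
        rw [hDk]
        have ho1 := hoddD (k-1) (by omega)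
        rw [Nat.odd_iff] at ho1
        omega
      | succ d ih =>
        intro j hj1 hjk hd
        have hjlt : j < k := by omega
        rw [Bkm.g_succ k _ j hjlt, ih (j+1) (by omega) (by omega) (by omega),
          hPfq j hj1 (by omega)]
        simp only [Nat.add_sub_cancel, hqdef]
        have ho1 := hoddD (j-1) (by omega)
        have ho2 := hoddD j (by omega)
        rw [Nat.odd_iff] at ho1 ho2
        have hst := hstrict (j-1) (by omega)
        rw [show j - 1 + 1 = j from by omega] at hst
        omega
    have hLD : Bkm.L k (Bkm.Pf k p) = D := by
      apply List.ext_getElem (by rw [Bkm.L_length, hlen])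
      intro i h1 h2
      rw [← List.getD_eq_getElem _ 0 h1, ← List.getD_eq_getElem _ 0 h2]
      rw [Bkm.L_getD k _ i (by rwa [Bkm.L_length] at h1),
        hgeq (k - (i+1)) (i+1) (by omega) (by omega) rfl]
      simp only [Nat.add_sub_cancel]
    have hSf : Bkm.Sfun k (Bkm.Pf k p) = S := by
      rw [Bkm.Sfun, hLD, hDS]
    refine ⟨p, ?_, hSf⟩
    rw [hs, Finset.mem_filter, Finset.mem_pi]
    constructor
    · intro a ha
      simp only [Finset.mem_Icc] at ha
      rw [Finset.mem_range, hpdef]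
      exact hq a ha.1 ha.2
    · rw [Bkm.attach_sum]
      have h1 : (Bkm.Sfun k (Bkm.Pf k p)).sum id = n := by rw [hSf]; exact hsum
      rw [Bkm.Sfun_sum, Bkm.sum_g] at h1
      omega
end
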